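/- arXiv:1503.06700 — 4 statements merged into one kernel-verified Lean document; each statement's English description precedes it below -/
import Mathlib

section
/- Suppose w ∈ H¹(0,∞) with w(0) = 0, w(t) → 0 as t → ∞, and w satisfies -w'' + w = h on (0,∞) where h ∈ L¹(0,∞). Then there exists a constant C (independent of w and h) such that ‖w‖_{H¹(0,∞)} ≤ C ‖h‖_{L¹(0,∞)}. -/
open MeasureTheory Real Set Filter

lemma aux_lim_zero {f : ℝ → ℝ} {L : ℝ} (hf : IntegrableOn f (Ioi 0))
    (hl : Tendsto f atTop (nhds L)) : L = 0 := by
  by_contra hL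
  have habs : Tendsto (fun x => |f x|) atTop (nhds |L|) := hl.abs
  have h2 : (0:ℝ) < |L| := abs_pos.mpr hL
  obtain ⟨a, ha⟩ := eventually_atTop.mp
    (habs.eventually (eventually_ge_nhds (show |L|/2 < |L| by linarith)))
  set b := max a 1 with hb
  have hb0 : (0:ℝ) < b := lt_of_lt_of_le one_pos (le_max_right a 1)
  have hsub : Ioi b ⊆ Ioi (0:ℝ) := Ioi_subset_Ioi hb0.le
  have hfi : IntegrableOn f (Ioi b) := hf.mono_set hsub
  have hconst : Integrable (fun _ : ℝ => |L|/2) (volume.restrict (Ioi b)) := by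
    apply Integrable.mono' hfi.abs aestronglyMeasurable_const
    refine (ae_restrict_iff' measurableSet_Ioi).mpr (ae_of_all _ (fun x hx => ?_))
    have : |L|/2 ≤ |f x| := ha x (le_trans (le_max_left a 1) (le_of_lt hx))
    simpa [abs_of_nonneg (by positivity : (0:ℝ) ≤ |L|/2)] using this
  rw [integrable_const_iff] at hconst
  rcases hconst with h | h
  · exact absurd h (by positivity)
  · have h := h.measure_univ_lt_top
    simp [Measure.restrict_apply_univ, Real.volume_Ioi] at h

lemma sup_bound (w : ℝ → ℝ) (hw1 : ∀ t, HasDerivAt w (deriv w t) t)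
    (cw' : Continuous (deriv w))
    (hE : IntegrableOn (fun t => (deriv w t) ^ 2 + (w t) ^ 2) (Ioi 0))
    (hlim : Tendsto w atTop (nhds 0)) :
    ∀ t : ℝ, 0 ≤ t → (w t) ^ 2 ≤ ∫ u in Ioi (0:ℝ), (deriv w u) ^ 2 + (w u) ^ 2 := by
  intro t ht
  have cw : Continuous w := continuous_iff_continuousAt.mpr (fun t => (hw1 t).continuousAt)
  set g : ℝ → ℝ := fun u => deriv w u * w u + w u * deriv w u with hg
  have cg : Continuous g := (cw'.mul cw).add (cw.mul cw')
  have hbd : ∀ u, |g u| ≤ (deriv w u) ^ 2 + (w u) ^ 2 := by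
    intro u
    rw [abs_le]
    simp only [hg]
    constructor <;> nlinarith [sq_nonneg (deriv w u + w u), sq_nonneg (deriv w u - w u)]
  have hgi : ∀ s : ℝ, 0 ≤ s → IntegrableOn g (Ioi s) := by
    intro s hs
    apply Integrable.mono' (hE.mono_set (Ioi_subset_Ioi hs)) (cg.aestronglyMeasurable.restrict)
    exact ae_of_all _ (fun u => hbd u)
  have hderiv : ∀ u : ℝ, HasDerivAt (fun x => w x * w x) (g u) u := fun u => (hw1 u).mul (hw1 u)
  have hftc : ∀ T : ℝ, ∫ u in t..T, g u = w T * w T - w t * w t := by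
    intro T
    exact intervalIntegral.integral_eq_sub_of_hasDerivAt (fun u _ => hderiv u)
      (cg.intervalIntegrable t T)
  have h1 : Tendsto (fun T => ∫ u in t..T, g u) atTop (nhds (∫ u in Ioi t, g u)) :=
    intervalIntegral_tendsto_integral_Ioi t (hgi t ht) tendsto_id
  have h2 : Tendsto (fun T => w T * w T - w t * w t) atTop (nhds (0 - w t * w t)) := by
    simpa using (hlim.mul hlim).sub (tendsto_const_nhds (x := w t * w t))
  have key : ∫ u in Ioi t, g u = 0 - w t * w t :=
    tendsto_nhds_unique ((tendsto_congr hftc).mp h1) h2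
  have h3 : (w t) ^ 2 = -(∫ u in Ioi t, g u) := by rw [key]; ring
  have h4 : -(∫ u in Ioi t, g u) ≤ ∫ u in Ioi t, |g u| := by
    calc -(∫ u in Ioi t, g u) ≤ |∫ u in Ioi t, g u| := neg_le_abs _
    _ ≤ ∫ u in Ioi t, |g u| := by
        simpa [Real.norm_eq_abs] using norm_integral_le_integral_norm (μ := volume.restrict (Ioi t)) g
  have h5 : ∫ u in Ioi t, |g u| ≤ ∫ u in Ioi t, (deriv w u) ^ 2 + (w u) ^ 2 :=
    integral_mono (hgi t ht).abs (hE.mono_set (Ioi_subset_Ioi ht)) (fun u => hbd u)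
  have h6 : ∫ u in Ioi t, (deriv w u) ^ 2 + (w u) ^ 2
      ≤ ∫ u in Ioi (0:ℝ), (deriv w u) ^ 2 + (w u) ^ 2 := by
    apply setIntegral_mono_set hE
    · exact ae_of_all _ (fun u => by positivity)
    · exact HasSubset.Subset.eventuallyLE (Ioi_subset_Ioi ht)
  linarith

theorem stmt5 :
    ∃ C : ℝ, 0 < C ∧ ∀ (w h : ℝ → ℝ),
      (∀ t : ℝ, HasDerivAt w (deriv w t) t) →
      (∀ t : ℝ, HasDerivAt (deriv w) (deriv (deriv w) t) t) →
      IntegrableOn (fun t => (deriv w t) ^ 2 + (w t) ^ 2) (Ioi 0) →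
      w 0 = 0 → Tendsto w atTop (nhds 0) →
      IntegrableOn h (Ioi 0) →
      (∀ t : ℝ, 0 < t → -(deriv (deriv w) t) + w t = h t) →
      Real.sqrt (∫ t in Ioi (0:ℝ), (deriv w t) ^ 2 + (w t) ^ 2)
        ≤ C * ∫ t in Ioi (0:ℝ), |h t| := by
  refine ⟨1, one_pos, fun w h hw1 hw2 hE hw0 hlim hh heq => ?_⟩
  set E : ℝ := ∫ t in Ioi (0:ℝ), (deriv w t) ^ 2 + (w t) ^ 2 with hEdef
  have cw : Continuous w := continuous_iff_continuousAt.mpr (fun t => (hw1 t).continuousAt)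
  have cw' : Continuous (deriv w) := continuous_iff_continuousAt.mpr (fun t => (hw2 t).continuousAt)
  have hE0 : 0 ≤ E := setIntegral_nonneg measurableSet_Ioi (fun t _ => by positivity)
  -- sup bound
  have hsup : ∀ t : ℝ, 0 ≤ t → |w t| ≤ Real.sqrt E := by
    intro t ht
    have := sup_bound w hw1 cw' hE hlim t ht
    calc |w t| = Real.sqrt ((w t) ^ 2) := (Real.sqrt_sq_eq_abs _).symm
    _ ≤ Real.sqrt E := Real.sqrt_le_sqrt this
  -- integrability of h * w
  have hhw : IntegrableOn (fun t => h t * w t) (Ioi 0) := by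
    apply Integrable.mono' (hh.norm.const_mul (Real.sqrt E))
      (hh.aestronglyMeasurable.mul cw.aestronglyMeasurable.restrict)
    refine (ae_restrict_iff' measurableSet_Ioi).mpr (ae_of_all _ (fun t ht => ?_))
    simp only [Pi.mul_apply, Real.norm_eq_abs, abs_mul]
    calc |h t| * |w t| ≤ |h t| * Real.sqrt E :=
          mul_le_mul_of_nonneg_left (hsup t (le_of_lt ht)) (abs_nonneg _)
    _ = Real.sqrt E * ‖h t‖ := by rw [Real.norm_eq_abs]; ring
  -- the function F = w' * w and its derivative
  set f' : ℝ → ℝ := fun t => deriv (deriv w) t * w t + deriv w t * deriv w t with hf'def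
  have hF : ∀ t : ℝ, HasDerivAt (fun x => deriv w x * w x) (f' t) t :=
    fun t => (hw2 t).mul (hw1 t)
  set q : ℝ → ℝ := fun t => ((deriv w t) ^ 2 + (w t) ^ 2) - h t * w t with hqdef
  have hqi : IntegrableOn q (Ioi 0) := hE.sub hhw
  have heqon : EqOn q f' (Ioi 0) := by
    intro t ht
    have h1 : deriv (deriv w) t = w t - h t := by
      have := heq t ht; linarith
    simp only [hqdef, hf'def, h1]
    ring
  have hf'i : IntegrableOn f' (Ioi 0) := hqi.congr_fun heqon measurableSet_Ioi
  have hIq : ∫ t in Ioi (0:ℝ), f' t = E - ∫ t in Ioi (0:ℝ), h t * w t := by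
    rw [← setIntegral_congr_fun measurableSet_Ioi heqon]
    simpa [hqdef] using integral_sub hE hhw
  -- FTC on [0, T]
  have hftc : ∀ᶠ T in (atTop : Filter ℝ), ∫ u in (0:ℝ)..T, f' u = deriv w T * w T := by
    filter_upwards [eventually_ge_atTop (0:ℝ)] with T hT
    have hint : IntervalIntegrable f' volume 0 T := by
      rw [intervalIntegrable_iff_integrableOn_Ioc_of_le hT]
      exact hf'i.mono_set Ioc_subset_Ioi_self
    have := intervalIntegral.integral_eq_sub_of_hasDerivAt (fun u _ => hF u) hint
    rw [this, hw0]; ring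
  have h1 : Tendsto (fun T => ∫ u in (0:ℝ)..T, f' u) atTop
      (nhds (E - ∫ t in Ioi (0:ℝ), h t * w t)) := by
    rw [← hIq]
    exact intervalIntegral_tendsto_integral_Ioi 0 hf'i tendsto_id
  have hFlim : Tendsto (fun T => deriv w T * w T) atTop
      (nhds (E - ∫ t in Ioi (0:ℝ), h t * w t)) := by
    exact Tendsto.congr' hftc h1
  -- F is integrable, so the limit is 0
  have hFi : IntegrableOn (fun T => deriv w T * w T) (Ioi 0) := by
    apply Integrable.mono' hE ((cw'.mul cw).aestronglyMeasurable.restrict)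
    refine ae_of_all _ (fun t => ?_)
    rw [Real.norm_eq_abs, Pi.mul_apply, abs_mul]
    nlinarith [sq_nonneg (|deriv w t| - |w t|), sq_abs (deriv w t), sq_abs (w t),
      abs_nonneg (deriv w t), abs_nonneg (w t)]
  have hL0 : E - (∫ t in Ioi (0:ℝ), h t * w t) = 0 := aux_lim_zero hFi hFlim
  have hEeq : E = ∫ t in Ioi (0:ℝ), h t * w t := by linarith
  -- estimate
  have hmain : E ≤ Real.sqrt E * ∫ t in Ioi (0:ℝ), |h t| := by
    calc E = ∫ t in Ioi (0:ℝ), h t * w t := hEeq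
    _ ≤ ∫ t in Ioi (0:ℝ), Real.sqrt E * |h t| := by
        apply setIntegral_mono_on hhw ((hh.abs).const_mul _) measurableSet_Ioi
        intro t ht
        calc h t * w t ≤ |h t * w t| := le_abs_self _
        _ = |h t| * |w t| := abs_mul _ _
        _ ≤ |h t| * Real.sqrt E := mul_le_mul_of_nonneg_left (hsup t (le_of_lt ht)) (abs_nonneg _)
        _ = Real.sqrt E * |h t| := mul_comm _ _
    _ = Real.sqrt E * ∫ t in Ioi (0:ℝ), |h t| := integral_const_mul _ _
  have hhn : 0 ≤ ∫ t in Ioi (0:ℝ), |h t| :=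
    setIntegral_nonneg measurableSet_Ioi (fun t _ => abs_nonneg _)
  rw [one_mul]
  rcases eq_or_lt_of_le (Real.sqrt_nonneg E) with hz | hz
  · rw [← hz]; exact hhn
  · have : Real.sqrt E * Real.sqrt E = E := Real.mul_self_sqrt hE0
    nlinarith
end

section
/- Let L⁻¹ denote the solution operator of the linear Dirichlet problem -w'' + (N-2)w' + (N-1)w = h, w(0)=w(∞)=0, given by the explicit Green's-function formula. If h ≥ 0 on (0,∞), then L⁻¹h ≥ 0 on [0,∞). In particular α = λ L⁻¹ h₁ is a lower solution of the nonlinear problem -w'' + (N-2)w' + (N-1)w = ((N-1)/2)e^{-t}w² + λh₁, i.e., L α ≤ N(α) + λh₁ pointwise. -/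
open MeasureTheory Real Set Filter Topology

/-- Green's operator for the Dirichlet problem `-w'' + (N-2)w' + (N-1)w = h`,
`w(0) = w(∞) = 0`. -/
noncomputable def Linv (N : ℕ) (h : ℝ → ℝ) (t : ℝ) : ℝ :=
  -(Real.exp (-t) / N) * (∫ s in Set.Ioi (0:ℝ), Real.exp ((1 - (N:ℝ)) * s) * h s)
  + (Real.exp (-t) / N) * (∫ s in (0:ℝ)..t, Real.exp s * h s)
  + (Real.exp (((N:ℝ) - 1) * t) / N) * (∫ s in Set.Ioi t, Real.exp ((1 - (N:ℝ)) * s) * h s)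

lemma split_Ioi' (f : ℝ → ℝ) (hf : IntegrableOn f (Ioi 0)) {t : ℝ} (ht : 0 ≤ t) :
    ∫ s in Ioi (0:ℝ), f s = (∫ s in Ioc (0:ℝ) t, f s) + ∫ s in Ioi t, f s := by
  rw [← setIntegral_union (Ioc_disjoint_Ioi le_rfl) measurableSet_Ioi
    (hf.mono_set Ioc_subset_Ioi_self) (hf.mono_set (Ioi_subset_Ioi ht)),
    Ioc_union_Ioi_eq_Ioi ht]

lemma exp_mul_integrableOn' (N : ℕ) (h : ℝ → ℝ)
    (hint : IntegrableOn (fun s => exp ((1 - (N:ℝ)) * s) * h s) (Ioi 0))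
    {t : ℝ} (_ht : 0 ≤ t) : IntegrableOn (fun s => exp s * h s) (Ioc 0 t) := by
  have hintK : IntegrableOn (fun s => exp ((1 - (N:ℝ)) * s) * h s) (Ioc 0 t) :=
    hint.mono_set Ioc_subset_Ioi_self
  have hfun : (fun s : ℝ => exp s * h s)
      = fun s => exp ((N:ℝ) * s) * (exp ((1 - (N:ℝ)) * s) * h s) := by
    funext s; rw [← mul_assoc, ← exp_add]; ring_nf
  rw [hfun]
  refine Integrable.mono' (g := fun s => exp ((N:ℝ) * t) * |exp ((1 - (N:ℝ)) * s) * h s|)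
    (hintK.norm.const_mul _)
    ((Continuous.aestronglyMeasurable (by fun_prop)).mul hintK.aestronglyMeasurable) ?_
  rw [ae_restrict_iff' measurableSet_Ioc]
  filter_upwards with s hs
  rw [Real.norm_eq_abs, abs_mul, abs_exp]
  refine mul_le_mul_of_nonneg_right (exp_le_exp.2 ?_) (abs_nonneg _)
  nlinarith [hs.1.le, hs.2, Nat.cast_nonneg (α := ℝ) N]

theorem stmt10 (N : ℕ) (hN : N = 2 ∨ N = 3) (lam : ℝ)
    (g : ℝ → ℝ) (hg : IntegrableOn g (Ioo 0 1))
    (h₁ : ℝ → ℝ)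
    (hh₁ : ∀ t : ℝ, h₁ t = exp (((N:ℝ) - 3) * t) * ∫ s in (0:ℝ)..(exp (-t)), g s)
    (α : ℝ → ℝ) (hα : ∀ t : ℝ, α t = lam * Linv N h₁ t) :
    (∀ h : ℝ → ℝ,
      (IntegrableOn (fun s => exp ((1 - (N:ℝ)) * s) * h s) (Ioi 0)) →
      (∀ s : ℝ, 0 < s → 0 ≤ h s) →
      ∀ t : ℝ, 0 ≤ t → 0 ≤ Linv N h t) ∧
    (∀ t : ℝ, 0 < t →
      -(deriv (deriv α) t) + ((N:ℝ) - 2) * deriv α t + ((N:ℝ) - 1) * α t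
        ≤ (((N:ℝ) - 1) / 2) * exp (-t) * (α t) ^ 2 + lam * h₁ t) := by
  have hN2 : 2 ≤ N := by rcases hN with h | h <;> simp [h]
  constructor
  · intro h hint hpos t ht
    rw [Linv]
    have hn2 : (2:ℝ) ≤ (N:ℝ) := by exact_mod_cast hN2
    have hn0 : (0:ℝ) < (N:ℝ) := by linarith
    have hintK : IntegrableOn (fun s => exp ((1 - (N:ℝ)) * s) * h s) (Ioc 0 t) :=
      hint.mono_set Ioc_subset_Ioi_self
    have hintJ := exp_mul_integrableOn' N h hint ht
    have hJK : (∫ s in Ioc (0:ℝ) t, exp ((1 - (N:ℝ)) * s) * h s)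
        ≤ ∫ s in Ioc (0:ℝ) t, exp s * h s := by
      refine setIntegral_mono_on hintK hintJ measurableSet_Ioc fun s hs => ?_
      have : exp ((1 - (N:ℝ)) * s) ≤ exp s := by
        apply exp_le_exp.2; nlinarith [hs.1.le]
      exact mul_le_mul_of_nonneg_right this (hpos s hs.1)
    have hI : 0 ≤ ∫ s in Ioi t, exp ((1 - (N:ℝ)) * s) * h s :=
      setIntegral_nonneg measurableSet_Ioi fun s hs =>
        mul_nonneg (exp_pos _).le (hpos s (lt_of_le_of_lt ht hs))
    have hsplit := split_Ioi' _ hint ht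
    rw [intervalIntegral.integral_of_le ht, hsplit]
    set P := ∫ s in Ioc (0:ℝ) t, exp ((1 - (N:ℝ)) * s) * h s with hP
    set Q := ∫ s in Ioi t, exp ((1 - (N:ℝ)) * s) * h s with hQ
    set R := ∫ s in Ioc (0:ℝ) t, exp s * h s with hR
    have e1 : exp (-t) ≤ exp (((N:ℝ) - 1) * t) := by
      apply exp_le_exp.2; nlinarith
    have h2 : 0 ≤ (exp (-t) / N) * (R - P) :=
      mul_nonneg (div_nonneg (exp_pos _).le hn0.le) (by linarith)
    have h3 : 0 ≤ ((exp (((N:ℝ) - 1) * t) - exp (-t)) / N) * Q :=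
      mul_nonneg (div_nonneg (by linarith) hn0.le) hI
    have key : -(Real.exp (-t) / N) * (P + Q) + (Real.exp (-t) / N) * R
        + (Real.exp (((N:ℝ) - 1) * t) / N) * Q
        = (exp (-t) / N) * (R - P) + ((exp (((N:ℝ) - 1) * t) - exp (-t)) / N) * Q := by ring
    rw [key]
    linarith
  · intro t ht
    have hN23 : 2 ≤ N ∧ N ≤ 3 := by rcases hN with h | h <;> simp [h]
    have hn2 : (2:ℝ) ≤ (N:ℝ) := by exact_mod_cast hN23.1
    have hn3 : (N:ℝ) ≤ 3 := by exact_mod_cast hN23.2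
    have hn0 : (0:ℝ) < (N:ℝ) := by linarith
    set C := ∫ s in Ioo (0:ℝ) 1, |g s| with hCdef
    have hC0 : 0 ≤ C := setIntegral_nonneg measurableSet_Ioo fun _ _ => abs_nonneg _
    -- bound on h₁
    have hbound : ∀ s : ℝ, 0 < s → |h₁ s| ≤ C := by
      intro s hs
      rw [hh₁, abs_mul, abs_exp]
      have hx0 : (0:ℝ) < exp (-s) := exp_pos _
      have hx1 : exp (-s) < 1 := exp_lt_one_iff.2 (by linarith)
      have e1 : exp (((N:ℝ) - 3) * s) ≤ 1 := by
        rw [← exp_zero]; exact exp_le_exp.2 (by nlinarith)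
      have e2 : |∫ u in (0:ℝ)..(exp (-s)), g u| ≤ C := by
        calc |∫ u in (0:ℝ)..(exp (-s)), g u| ≤ ∫ u in (0:ℝ)..(exp (-s)), |g u| :=
              intervalIntegral.abs_integral_le_integral_abs hx0.le
          _ = ∫ u in Ioc (0:ℝ) (exp (-s)), |g u| := intervalIntegral.integral_of_le hx0.le
          _ ≤ C := by
              refine setIntegral_mono_set hg.abs
                (Filter.Eventually.of_forall fun _ => abs_nonneg _) ?_
              exact (Filter.Eventually.of_forall
                (fun u hu => (⟨hu.1, lt_of_le_of_lt hu.2 hx1⟩ : u ∈ Ioo (0:ℝ) 1)))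
      calc exp (((N:ℝ) - 3) * s) * |∫ u in (0:ℝ)..(exp (-s)), g u| ≤ 1 * C :=
            mul_le_mul e1 e2 (abs_nonneg _) zero_le_one
        _ = C := one_mul C
    -- continuity of h₁ on (0,∞)
    have hcont : ∀ s : ℝ, 0 < s → ContinuousAt h₁ s := by
      intro s hs
      have hfun : h₁ = fun u => exp (((N:ℝ) - 3) * u) * ∫ v in (0:ℝ)..(exp (-u)), g v :=
        funext hh₁
      rw [hfun]
      have hx0 : (0:ℝ) < exp (-s) := exp_pos _
      have hx1 : exp (-s) < 1 := exp_lt_one_iff.2 (by linarith)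
      set b := (exp (-s) + 1) / 2 with hbdef
      have hb0 : (0:ℝ) < b := by positivity
      have hbx : exp (-s) < b := by rw [hbdef]; linarith
      have hb1 : b < 1 := by rw [hbdef]; linarith
      have hgb : IntegrableOn g (Icc 0 b) :=
        (integrableOn_Icc_iff_integrableOn_Ioo (f := g) (a := 0) (b := b)).2 (hg.mono_set (Ioo_subset_Ioo le_rfl hb1.le))
      have hPc : ContinuousOn (fun x => ∫ v in (0:ℝ)..x, g v) (Icc 0 b) := by
        have := intervalIntegral.continuousOn_primitive_interval
          (a := 0) (b := b) (μ := volume) (f := g) (by rwa [uIcc_of_le hb0.le])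
        rwa [uIcc_of_le hb0.le] at this
      have hPat : ContinuousAt (fun x => ∫ v in (0:ℝ)..x, g v) (exp (-s)) :=
        hPc.continuousAt (Icc_mem_nhds hx0 hbx)
      have hE : ContinuousAt (fun u : ℝ => exp (-u)) s := by fun_prop
      have hcomp : ContinuousAt (fun u : ℝ => ∫ v in (0:ℝ)..(exp (-u)), g v) s :=
        ContinuousAt.comp (g := fun x => ∫ v in (0:ℝ)..x, g v) (f := fun u : ℝ => exp (-u)) hPat hE
      exact ContinuousAt.mul (by fun_prop) hcomp
    have hcontMul : ∀ c : ℝ, ContinuousOn (fun u => exp (c * u) * h₁ u) (Ioi 0) :=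
      fun c u hu => (ContinuousAt.mul (by fun_prop) (hcont u hu)).continuousWithinAt
    have hcontE : ContinuousOn (fun u => exp u * h₁ u) (Ioi 0) :=
      fun u hu => (ContinuousAt.mul (by fun_prop) (hcont u hu)).continuousWithinAt
    -- integrability on Ioc 0 t'
    have hIocInt : ∀ c : ℝ, ∀ t' : ℝ, 0 < t' →
        IntegrableOn (fun s => exp (c * s) * h₁ s) (Ioc 0 t') := by
      intro c t' ht'
      refine Integrable.mono' (g := fun _ => exp (|c| * t') * C)
        (integrableOn_const measure_Ioc_lt_top.ne)
        (((hcontMul c).mono Ioc_subset_Ioi_self).aestronglyMeasurable measurableSet_Ioc) ?_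
      rw [ae_restrict_iff' measurableSet_Ioc]
      filter_upwards with s hs
      rw [Real.norm_eq_abs, abs_mul, abs_exp]
      refine mul_le_mul (exp_le_exp.2 ?_) (hbound s hs.1) (abs_nonneg _) (exp_pos _).le
      calc c * s ≤ |c| * s := mul_le_mul_of_nonneg_right (le_abs_self c) hs.1.le
        _ ≤ |c| * t' := mul_le_mul_of_nonneg_left hs.2 (abs_nonneg c)
    have hIocIntE : ∀ t' : ℝ, 0 < t' → IntegrableOn (fun s => exp s * h₁ s) (Ioc 0 t') := by
      intro t' ht'
      have := hIocInt 1 t' ht'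
      simpa using this
    -- integrability on Ioi 0
    have hIoiInt : IntegrableOn (fun s => exp ((1 - (N:ℝ)) * s) * h₁ s) (Ioi 0) := by
      refine Integrable.mono' (g := fun s => C * exp ((1 - (N:ℝ)) * s)) ?_
        ((hcontMul _).aestronglyMeasurable measurableSet_Ioi) ?_
      · have h0 : (fun s : ℝ => C * exp ((1 - (N:ℝ)) * s))
            = fun s => C * exp (-((N:ℝ) - 1) * s) := by
          funext s; ring_nf
        rw [h0]
        exact (exp_neg_integrableOn_Ioi 0 (by linarith : (0:ℝ) < (N:ℝ) - 1)).const_mul C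
      · rw [ae_restrict_iff' measurableSet_Ioi]
        filter_upwards with s hs
        rw [Real.norm_eq_abs, abs_mul, abs_exp, mul_comm]
        exact mul_le_mul_of_nonneg_right (hbound s hs) (exp_pos _).le
    set A := ∫ s in Ioi (0:ℝ), exp ((1 - (N:ℝ)) * s) * h₁ s with hAdef
    set J : ℝ → ℝ := fun u => ∫ s in (0:ℝ)..u, exp s * h₁ s with hJdef
    set K : ℝ → ℝ := fun u => ∫ s in (0:ℝ)..u, exp ((1 - (N:ℝ)) * s) * h₁ s with hKdef
    set φ : ℝ → ℝ := fun u =>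
      (exp (-u) * (J u - A) + exp (((N:ℝ) - 1) * u) * (A - K u)) / N with hφdef
    set ψ : ℝ → ℝ := fun u =>
      (-(exp (-u)) * (J u - A) + ((N:ℝ) - 1) * exp (((N:ℝ) - 1) * u) * (A - K u)) / N with hψdef
    set χ : ℝ → ℝ := fun u =>
      (exp (-u) * (J u - A) + ((N:ℝ) - 1) ^ 2 * exp (((N:ℝ) - 1) * u) * (A - K u)
        - (N:ℝ) * h₁ u) / N with hχdef
    have hLφ : ∀ u : ℝ, 0 < u → Linv N h₁ u = φ u := by
      intro u hu
      have hsplit := split_Ioi' _ hIoiInt hu.le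
      rw [← hAdef] at hsplit
      have hKu : (∫ s in Set.Ioi u, exp ((1 - (N:ℝ)) * s) * h₁ s) = A - K u := by
        rw [hKdef]
        simp only
        rw [intervalIntegral.integral_of_le hu.le]
        linarith [hsplit]
      simp only [Linv, hφdef, hJdef]
      rw [hKu, ← hAdef]
      ring
    -- FTC derivatives
    have hJd : ∀ u : ℝ, 0 < u → HasDerivAt J (exp u * h₁ u) u := by
      intro u hu
      refine intervalIntegral.integral_hasDerivAt_right ?_
        (hcontE.stronglyMeasurableAtFilter isOpen_Ioi u hu) (hcontE.continuousAt (Ioi_mem_nhds hu))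
      rw [intervalIntegrable_iff_integrableOn_Ioc_of_le hu.le]
      exact hIocIntE u hu
    have hKd : ∀ u : ℝ, 0 < u → HasDerivAt K (exp ((1 - (N:ℝ)) * u) * h₁ u) u := by
      intro u hu
      refine intervalIntegral.integral_hasDerivAt_right ?_
        ((hcontMul _).stronglyMeasurableAtFilter isOpen_Ioi u hu)
        ((hcontMul _).continuousAt (Ioi_mem_nhds hu))
      rw [intervalIntegrable_iff_integrableOn_Ioc_of_le hu.le]
      exact hIocInt _ u hu
    have hE1 : ∀ u : ℝ, HasDerivAt (fun u : ℝ => exp (-u)) (-exp (-u)) u := by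
      intro u
      simpa using ((hasDerivAt_id u).neg).exp
    have hE2 : ∀ u : ℝ, HasDerivAt (fun u : ℝ => exp (((N:ℝ) - 1) * u))
        (((N:ℝ) - 1) * exp (((N:ℝ) - 1) * u)) u := by
      intro u
      simpa [mul_comm] using ((hasDerivAt_id u).const_mul ((N:ℝ) - 1)).exp
    have m2 : ∀ u : ℝ, exp (((N:ℝ) - 1) * u) * exp ((1 - (N:ℝ)) * u) = 1 := by
      intro u
      rw [← exp_add, show ((N:ℝ) - 1) * u + (1 - (N:ℝ)) * u = 0 by ring, exp_zero]
    have m1 : ∀ u : ℝ, exp (-u) * exp u = 1 := by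
      intro u; rw [← exp_add]; simp
    have hφ' : ∀ u : ℝ, 0 < u → HasDerivAt φ (ψ u) u := by
      intro u hu
      have hc := (((hE1 u).mul ((hJd u hu).sub_const A)).add
        ((hE2 u).mul ((hasDerivAt_const u A).sub (hKd u hu)))).div_const (N:ℝ)
      rw [hφdef, hψdef]
      refine HasDerivAt.congr_deriv hc (Eq.symm ?_)
      simp only [Pi.sub_apply, Pi.neg_apply]
      linear_combination (h₁ u / (N:ℝ)) * m2 u - (h₁ u / (N:ℝ)) * m1 u
    have hψ' : ∀ u : ℝ, 0 < u → HasDerivAt ψ (χ u) u := by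
      intro u hu
      have hc := ((((hE1 u).neg).mul ((hJd u hu).sub_const A)).add
        (((hE2 u).const_mul ((N:ℝ) - 1)).mul ((hasDerivAt_const u A).sub (hKd u hu)))).div_const (N:ℝ)
      rw [hψdef, hχdef]
      refine HasDerivAt.congr_deriv hc (Eq.symm ?_)
      simp only [Pi.sub_apply, Pi.neg_apply]
      linear_combination (((N:ℝ) - 1) * h₁ u / (N:ℝ)) * m2 u + (h₁ u / (N:ℝ)) * m1 u
    have hαd : ∀ u : ℝ, 0 < u → HasDerivAt α (lam * ψ u) u := by
      intro u hu
      refine ((hφ' u hu).const_mul lam).congr_of_eventuallyEq ?_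
      filter_upwards [Ioi_mem_nhds hu] with x hx
      rw [hα, hLφ x hx]
    have hdd : deriv (deriv α) t = lam * χ t := by
      have heq : deriv α =ᶠ[𝓝 t] fun u => lam * ψ u := by
        filter_upwards [Ioi_mem_nhds ht] with x hx
        exact (hαd x hx).deriv
      rw [heq.deriv_eq]
      exact ((hψ' t ht).const_mul lam).deriv
    have hd1 : deriv α t = lam * ψ t := (hαd t ht).deriv
    have hat : α t = lam * φ t := by rw [hα, hLφ t ht]
    rw [hdd, hd1, hat]
    have key : -(lam * χ t) + ((N:ℝ) - 2) * (lam * ψ t) + ((N:ℝ) - 1) * (lam * φ t)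
        = lam * h₁ t := by
      rw [hχdef, hψdef, hφdef]
      simp only
      field_simp
      ring
    have pos : 0 ≤ (((N:ℝ) - 1) / 2) * exp (-t) * (lam * φ t) ^ 2 :=
      mul_nonneg (mul_nonneg (by linarith) (exp_pos _).le) (sq_nonneg _)
    linarith
end

section
/- Suppose g ∈ L¹(0,1) with g ≥ 0 a.e. and ess sup g > 0, and let N ∈ {2,3}. Then there exists λ* > 0 such that for all λ > λ*, the singular boundary value problem -w'' + (N-2)w' + (N-1)w = ((N-1)/2)e^{-t}w² + λe^{(N-3)t}∫₀^{e^{-t}}g(s)ds, w(0) = w(∞) = 0, has no weak solution in H¹_μ. -/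
set_option maxHeartbeats 0


open MeasureTheory Real Set Filter

theorem stmt16 (N : ℕ) (hN : N = 2 ∨ N = 3)
    (g : ℝ → ℝ) (hg : IntegrableOn g (Ioo 0 1))
    (hg0 : ∀ᵐ s ∂(volume.restrict (Ioo (0:ℝ) 1)), 0 ≤ g s)
    (hgpos : 0 < ∫ s in Ioo (0:ℝ) 1, g s) :
    ∃ lamStar : ℝ, 0 < lamStar ∧ ∀ lam : ℝ, lamStar < lam →
      ¬ ∃ w : ℝ → ℝ,
        IntegrableOn
          (fun t => ((deriv w t) ^ 2 + (w t) ^ 2) * exp ((2 - (N:ℝ)) * t)) (Ioi 0) ∧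
        (∀ t : ℝ, 0 ≤ t →
          w t = (exp (-t) / N) *
              (∫ s in (0:ℝ)..t, exp s * (1 - exp (-(N:ℝ) * s)) *
                ((((N:ℝ) - 1) / 2) * exp (-s) * (w s) ^ 2
                  + lam * exp (((N:ℝ) - 3) * s) * ∫ u in (0:ℝ)..(exp (-s)), g u))
            + (exp (-t) / N) * (exp ((N:ℝ) * t) - 1) *
              (∫ s in Ioi t, exp ((1 - (N:ℝ)) * s) *
                ((((N:ℝ) - 1) / 2) * exp (-s) * (w s) ^ 2
                  + lam * exp (((N:ℝ) - 3) * s) * ∫ u in (0:ℝ)..(exp (-s)), g u))) := by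
  have hN2 : (2:ℝ) ≤ (N:ℝ) := by rcases hN with h | h <;> rw [h] <;> norm_num
  have hN3 : (N:ℝ) ≤ 3 := by rcases hN with h | h <;> rw [h] <;> norm_num
  have hN0 : (0:ℝ) < (N:ℝ) := by linarith
  -- the primitive of g
  set G : ℝ → ℝ := fun x => ∫ u in (0:ℝ)..x, g u with hGdef
  have hGapp : ∀ x : ℝ, G x = ∫ u in (0:ℝ)..x, g u := fun x => rfl
  have hgIcc : IntegrableOn g (Icc 0 1) := by
    rwa [integrableOn_Icc_iff_integrableOn_Ioo]
  have hGcont : ContinuousOn G (Icc 0 1) := by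
    have h := intervalIntegral.continuousOn_primitive_interval
      (a := (0:ℝ)) (b := 1) (μ := volume) (f := g)
      (by rwa [uIcc_of_le (by norm_num : (0:ℝ) ≤ 1)])
    rwa [uIcc_of_le (by norm_num : (0:ℝ) ≤ 1)] at h
  have hg0' : ∀ᵐ s ∂(volume.restrict (Ioc (0:ℝ) 1)), 0 ≤ g s := by
    rwa [← Measure.restrict_congr_set Ioo_ae_eq_Ioc]
  have hGnn : ∀ x : ℝ, 0 ≤ x → x ≤ 1 → 0 ≤ G x := by
    intro x hx0 hx1
    rw [hGapp, intervalIntegral.integral_of_le hx0]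
    refine setIntegral_nonneg_of_ae_restrict ?_
    exact ae_restrict_of_ae_restrict_of_subset (Ioc_subset_Ioc_right hx1) hg0'
  have hG1 : 0 < G 1 := by
    rw [hGapp, intervalIntegral.integral_of_le (by norm_num : (0:ℝ) ≤ 1),
      integral_Ioc_eq_integral_Ioo]
    exact hgpos
  clear_value G
  -- a point x₀ < 1 to the left of which G stays large
  obtain ⟨x₀, hx₀0, hx₀1, hx₀⟩ :
      ∃ x₀ : ℝ, 0 < x₀ ∧ x₀ < 1 ∧ ∀ x : ℝ, x₀ ≤ x → x ≤ 1 → G 1 / 2 ≤ G x := by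
    have hcw : ContinuousWithinAt G (Icc 0 1) 1 := hGcont 1 (by norm_num)
    have hev : ∀ᶠ x in nhdsWithin 1 (Icc 0 1), G 1 / 2 < G x :=
      hcw.eventually (eventually_gt_nhds (by linarith))
    rw [eventually_nhdsWithin_iff, Metric.eventually_nhds_iff] at hev
    obtain ⟨ε, hε, hev⟩ := hev
    refine ⟨max (1 - ε/2) (1/2), lt_max_of_lt_right (by norm_num), ?_, ?_⟩
    · apply max_lt <;> linarith
    · intro x h1 h2
      have hx0 : (0:ℝ) ≤ x := le_trans (by norm_num) (le_trans (le_max_right _ _) h1)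
      have hd : dist x 1 < ε := by
        rw [Real.dist_eq, abs_of_nonpos (by linarith)]
        have : 1 - ε/2 ≤ x := le_trans (le_max_left _ _) h1
        linarith
      exact (hev hd ⟨hx0, h2⟩).le
  set s₀ : ℝ := -Real.log x₀ with hs₀def
  have hs₀ : 0 < s₀ := by
    have := Real.log_neg hx₀0 hx₀1
    simp only [hs₀def]; linarith
  have hGs : ∀ s : ℝ, 0 ≤ s → s ≤ s₀ → G 1 / 2 ≤ G (exp (-s)) := by
    intro s hs0 hs1
    refine hx₀ _ ?_ (exp_le_one_iff.mpr (by linarith))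
    calc x₀ = exp (Real.log x₀) := (Real.exp_log hx₀0).symm
    _ ≤ exp (-s) := exp_le_exp.2 (by simp only [hs₀def] at hs1; linarith)
  set b : ℝ := s₀ + 1 with hbdef
  set g₀ : ℝ := G 1 / 2 with hg₀def
  have hg₀ : 0 < g₀ := by simp only [hg₀def]; linarith
  set β : ℝ := (1 - exp (-s₀)) * (exp (-s₀) * g₀) with hβdef
  have hβ : 0 < β := by
    have h1 : exp (-s₀) < 1 := exp_lt_one_iff.mpr (by linarith)
    have h2 : 0 < exp (-s₀) := exp_pos _
    simp only [hβdef]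
    exact mul_pos (by linarith) (mul_pos h2 hg₀)
  set c_h : ℝ := exp (-b) / 3 * (β * (s₀ / 2)) with hchdef
  have hch : 0 < c_h := by
    have := exp_pos (-b); simp only [hchdef]; positivity
  set c₁ : ℝ := exp (-b) / 3 * ((1 - exp (-(2 * s₀))) / 2) with hc₁def
  have hc₁ : 0 < c₁ := by
    have h1 : exp (-(2*s₀)) < 1 := exp_lt_one_iff.mpr (by linarith)
    have := exp_pos (-b); simp only [hc₁def]; nlinarith
  set c₂ : ℝ := exp (-b) / 3 * ((exp (2 * s₀) - 1) * (exp (-(3 * b)) / 2)) with hc₂def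
  have hc₂ : 0 < c₂ := by
    have h1 : 1 < exp (2*s₀) := by
      rw [← Real.exp_zero]; exact exp_lt_exp.2 (by linarith)
    simp only [hc₂def]
    exact mul_pos (by positivity) (mul_pos (by linarith) (by positivity))
  set K : ℝ := min c₁ c₂ with hKdef
  have hK : 0 < K := lt_min hc₁ hc₂
  clear_value K c₂ c₁ c_h β g₀ b s₀
  refine ⟨1 + 2 / (K * c_h), by positivity, ?_⟩
  intro lam hlam
  rintro ⟨w, hf, heq⟩
  have hlam0 : 0 < lam := by
    have : 0 < 2 / (K * c_h) := by positivity
    linarith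
  have hKc : 0 < K * c_h := by positivity
  have hKlam : 2 ≤ K * (lam * c_h) := by
    have h2 : 2 / (K * c_h) < lam := by linarith
    have := (div_lt_iff₀ hKc).mp h2
    linarith
  -- abbreviations
  set F : ℝ → ℝ := fun t => ((deriv w t) ^ 2 + (w t) ^ 2) * exp ((2 - (N:ℝ)) * t) with hFdef
  set P : ℝ → ℝ := fun s => (((N:ℝ) - 1) / 2) * exp (-s) * (w s) ^ 2 with hPdef
  set R : ℝ → ℝ := fun s => lam * exp (((N:ℝ) - 3) * s) * ∫ u in (0:ℝ)..(exp (-s)), g u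
    with hRdef
  have hR : ∀ s : ℝ, R s = lam * (exp (((N:ℝ) - 3) * s) * G (exp (-s))) := by
    intro s; simp only [hRdef]; rw [hGapp]; ring
  have hRnn : ∀ s : ℝ, 0 ≤ s → 0 ≤ R s := by
    intro s hs
    rw [hR]
    have h := hGnn (exp (-s)) (exp_pos _).le (exp_le_one_iff.mpr (by linarith))
    exact mul_nonneg hlam0.le (mul_nonneg (exp_pos _).le h)
  have hcnn : 0 ≤ ((N:ℝ) - 1) / 2 := by linarith
  have hPnn : ∀ s : ℝ, 0 ≤ P s := by
    intro s; simp only [hPdef]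
    exact mul_nonneg (mul_nonneg hcnn (exp_pos _).le) (sq_nonneg _)
  have hFnn : ∀ s : ℝ, 0 ≤ F s := by
    intro s; simp only [hFdef]
    exact mul_nonneg (by positivity) (exp_pos _).le
  -- measurability of w squared
  have hFmeas : AEStronglyMeasurable F (volume.restrict (Ioi 0)) := hf.1
  have hw2meas : AEStronglyMeasurable (fun s => (w s) ^ 2) (volume.restrict (Ioi 0)) := by
    have hd : Measurable (fun s => (deriv w s) ^ 2) := (measurable_deriv w).pow_const 2
    have hexp : Continuous (fun s : ℝ => exp (((N:ℝ) - 2) * s)) := by continuity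
    have hkey : (fun s => (w s) ^ 2)
        = fun s => F s * exp (((N:ℝ) - 2) * s) - (deriv w s) ^ 2 := by
      funext s
      have h1 : exp ((2 - (N:ℝ)) * s) * exp (((N:ℝ) - 2) * s) = 1 := by
        rw [← Real.exp_add]; ring_nf; exact Real.exp_zero
      simp only [hFdef]
      rw [mul_assoc, h1, mul_one]; ring
    rw [hkey]
    exact (hFmeas.mul hexp.aestronglyMeasurable).sub hd.aestronglyMeasurable
  -- integrability of w squared on bounded intervals
  have hw2int : ∀ t : ℝ, 0 ≤ t → IntegrableOn (fun s => (w s) ^ 2) (Ioc 0 t) := by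
    intro t ht
    have hsub : Ioc (0:ℝ) t ⊆ Ioi 0 := Ioc_subset_Ioi_self
    refine Integrable.mono' ((hf.mono_set hsub).mul_const (exp (((N:ℝ) - 2) * t)))
      (hw2meas.mono_measure (Measure.restrict_mono hsub le_rfl)) ?_
    refine (ae_restrict_iff' measurableSet_Ioc).2 (ae_of_all _ ?_)
    intro s hs
    rw [Real.norm_eq_abs, abs_of_nonneg (sq_nonneg _)]
    have h1 : exp ((2 - (N:ℝ)) * t) ≤ exp ((2 - (N:ℝ)) * s) :=
      exp_le_exp.2 (by nlinarith [hs.1.le, hs.2])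
    have h2 : exp ((2 - (N:ℝ)) * t) * exp (((N:ℝ) - 2) * t) = 1 := by
      rw [← Real.exp_add]; ring_nf; exact Real.exp_zero
    have h3 : (0:ℝ) < exp (((N:ℝ) - 2) * t) := exp_pos _
    simp only [hFdef]
    nlinarith [sq_nonneg (deriv w s), sq_nonneg (w s), exp_pos ((2 - (N:ℝ)) * s),
      mul_nonneg (mul_nonneg (add_nonneg (sq_nonneg (deriv w s)) (sq_nonneg (w s))) h3.le)
        (sub_nonneg.2 h1)]
  -- integrability of the P-part on Ioi t
  have hJPint : ∀ t : ℝ, 0 ≤ t →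
      IntegrableOn (fun s => exp ((1 - (N:ℝ)) * s) * P s) (Ioi t) := by
    intro t ht
    have hsub : Ioi t ⊆ Ioi (0:ℝ) := Ioi_subset_Ioi ht
    have hfeq : (fun s => exp ((1 - (N:ℝ)) * s) * P s)
        = fun s => (exp ((1 - (N:ℝ)) * s) * (((N:ℝ) - 1) / 2 * exp (-s))) * (w s) ^ 2 := by
      funext s; simp only [hPdef]; ring
    rw [hfeq]
    have hcont1 : Continuous fun s : ℝ => exp ((1 - (N:ℝ)) * s) * (((N:ℝ) - 1) / 2 * exp (-s)) :=
      by fun_prop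
    refine Integrable.mono' (hf.mono_set hsub)
      (hcont1.aestronglyMeasurable.mul
        (hw2meas.mono_measure (Measure.restrict_mono hsub le_rfl))) ?_
    refine (ae_restrict_iff' measurableSet_Ioi).2 (ae_of_all _ ?_)
    intro s hs
    have hs0 : (0:ℝ) ≤ s := le_trans ht (le_of_lt hs)
    have h1 : exp ((1 - (N:ℝ)) * s) * exp (-s) ≤ exp ((2 - (N:ℝ)) * s) := by
      rw [← Real.exp_add]; exact exp_le_exp.2 (by nlinarith)
    have hnn : (0:ℝ) ≤ exp ((1 - (N:ℝ)) * s) * (((N:ℝ) - 1) / 2 * exp (-s)) * (w s) ^ 2 :=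
      mul_nonneg (mul_nonneg (exp_pos _).le (mul_nonneg hcnn (exp_pos _).le)) (sq_nonneg _)
    rw [Real.norm_eq_abs, abs_of_nonneg hnn]
    simp only [hFdef]
    nlinarith [sq_nonneg (w s), sq_nonneg (deriv w s), exp_pos ((2 - (N:ℝ)) * s),
      mul_le_mul_of_nonneg_right h1 (sq_nonneg (w s)),
      mul_nonneg (mul_nonneg (mul_nonneg (by linarith : (0:ℝ) ≤ 1 - ((N:ℝ) - 1) / 2)
        (exp_pos ((1 - (N:ℝ)) * s)).le) (exp_pos (-s)).le) (sq_nonneg (w s)),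
      mul_nonneg (sq_nonneg (deriv w s)) (exp_pos ((2 - (N:ℝ)) * s)).le]
  -- bound for G
  obtain ⟨CG, hCG0, hCG⟩ : ∃ CG : ℝ, 0 < CG ∧ ∀ x ∈ Icc (0:ℝ) 1, |G x| ≤ CG := by
    obtain ⟨C, hC⟩ := (isCompact_Icc).exists_bound_of_continuousOn hGcont
    exact ⟨max C 1, lt_of_lt_of_le one_pos (le_max_right _ _),
      fun x hx => le_trans (hC x hx) (le_max_left _ _)⟩
  -- continuity of R
  have hRcont : ContinuousOn R (Ici 0) := by
    have hmap : MapsTo (fun s : ℝ => exp (-s)) (Ici 0) (Icc 0 1) := by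
      intro s hs
      exact ⟨(exp_pos _).le, exp_le_one_iff.mpr (by simpa using hs)⟩
    have hQc : ContinuousOn (fun s : ℝ => G (exp (-s))) (Ici 0) :=
      hGcont.comp ((Real.continuous_exp.comp continuous_neg).continuousOn) hmap
    have hfeq : R = fun s => (lam * exp (((N:ℝ) - 3) * s)) * G (exp (-s)) := by
      funext s; rw [hR s]; ring
    rw [hfeq]
    exact ((continuous_const.mul (Real.continuous_exp.comp (by fun_prop))).continuousOn).mul hQc
  -- integrability of the R-part on Ioi t
  have hJRint : ∀ t : ℝ, 0 ≤ t →
      IntegrableOn (fun s => exp ((1 - (N:ℝ)) * s) * R s) (Ioi t) := by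
    intro t ht
    have hmaj : IntegrableOn (fun s => (lam * CG) * exp (-2 * s)) (Ioi t) :=
      (exp_neg_integrableOn_Ioi t (by norm_num : (0:ℝ) < 2)).const_mul _
    refine Integrable.mono' hmaj ?_ ?_
    · refine ContinuousOn.aestronglyMeasurable ?_ measurableSet_Ioi
      refine ContinuousOn.mono ?_ (fun x (hx : x ∈ Ioi t) => (le_trans ht hx.le : x ∈ Ici 0))
      exact ((by fun_prop : Continuous fun s : ℝ =>
        exp ((1 - (N:ℝ)) * s)).continuousOn).mul hRcont
    · refine (ae_restrict_iff' measurableSet_Ioi).2 (ae_of_all _ ?_)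
      intro s hs
      have hs0 : (0:ℝ) ≤ s := le_trans ht (le_of_lt hs)
      have h0 : 0 ≤ exp ((1 - (N:ℝ)) * s) * R s :=
        mul_nonneg (exp_pos _).le (hRnn s hs0)
      have hGx : |G (exp (-s))| ≤ CG :=
        hCG _ ⟨(exp_pos _).le, exp_le_one_iff.mpr (by linarith)⟩
      have he : exp ((1 - (N:ℝ)) * s) * exp (((N:ℝ) - 3) * s) = exp (-2 * s) := by
        rw [← Real.exp_add]; ring_nf
      have h5 : lam * (exp ((1 - (N:ℝ)) * s) * exp (((N:ℝ) - 3) * s)) * G (exp (-s))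
          ≤ lam * (exp ((1 - (N:ℝ)) * s) * exp (((N:ℝ) - 3) * s)) * CG :=
        mul_le_mul_of_nonneg_left (le_trans (le_abs_self _) hGx) (by positivity)
      rw [Real.norm_eq_abs, abs_of_nonneg h0, hR]
      calc exp ((1 - (N:ℝ)) * s) * (lam * (exp (((N:ℝ) - 3) * s) * G (exp (-s))))
          = lam * (exp ((1 - (N:ℝ)) * s) * exp (((N:ℝ) - 3) * s)) * G (exp (-s)) := by ring
        _ ≤ lam * (exp ((1 - (N:ℝ)) * s) * exp (((N:ℝ) - 3) * s)) * CG := h5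
        _ = lam * CG * exp (-2 * s) := by rw [he]; ring
  -- interval integrability of the P-part
  have hKPii : ∀ t : ℝ, 0 ≤ t →
      IntervalIntegrable (fun s => exp s * (1 - exp (-(N:ℝ) * s)) * P s) volume 0 t := by
    intro t ht
    rw [intervalIntegrable_iff_integrableOn_Ioc_of_le ht]
    have hfeq : (fun s => exp s * (1 - exp (-(N:ℝ) * s)) * P s)
        = fun s => (exp s * (1 - exp (-(N:ℝ) * s)) * (((N:ℝ) - 1) / 2 * exp (-s))) * (w s) ^ 2 := by
      funext s; simp only [hPdef]; ring
    rw [hfeq]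
    have hsub : Ioc (0:ℝ) t ⊆ Ioi 0 := Ioc_subset_Ioi_self
    have hcont1 : Continuous fun s : ℝ =>
        exp s * (1 - exp (-(N:ℝ) * s)) * (((N:ℝ) - 1) / 2 * exp (-s)) := by fun_prop
    refine Integrable.mono' (hw2int t ht)
      (hcont1.aestronglyMeasurable.mul
        (hw2meas.mono_measure (Measure.restrict_mono hsub le_rfl))) ?_
    refine (ae_restrict_iff' measurableSet_Ioc).2 (ae_of_all _ ?_)
    intro s hs
    have hs0 : (0:ℝ) ≤ s := hs.1.le
    have h1 : exp s * exp (-s) = 1 := by rw [← Real.exp_add]; simp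
    have h2 : (0:ℝ) ≤ 1 - exp (-(N:ℝ) * s) := by
      rw [sub_nonneg]; exact exp_le_one_iff.mpr (by nlinarith)
    have hcle : ((N:ℝ) - 1) / 2 ≤ 1 := by linarith
    have hE1 : exp (-(N:ℝ) * s) ≤ 1 := exp_le_one_iff.mpr (by nlinarith)
    have hcnn2 : (0:ℝ) ≤ exp s * (1 - exp (-(N:ℝ) * s)) * (((N:ℝ) - 1) / 2 * exp (-s)) :=
      mul_nonneg (mul_nonneg (exp_pos _).le h2) (mul_nonneg hcnn (exp_pos _).le)
    have hc1 : exp s * (1 - exp (-(N:ℝ) * s)) * (((N:ℝ) - 1) / 2 * exp (-s)) ≤ 1 := by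
      calc exp s * (1 - exp (-(N:ℝ) * s)) * (((N:ℝ) - 1) / 2 * exp (-s))
          = (1 - exp (-(N:ℝ) * s)) * (((N:ℝ) - 1) / 2) * (exp s * exp (-s)) := by ring
        _ = (1 - exp (-(N:ℝ) * s)) * (((N:ℝ) - 1) / 2) := by rw [h1, mul_one]
        _ ≤ 1 := by nlinarith [exp_pos (-(N:ℝ) * s)]
    rw [Real.norm_eq_abs, abs_mul, abs_of_nonneg (sq_nonneg (w s)), abs_of_nonneg hcnn2]
    nlinarith [mul_le_mul_of_nonneg_right hc1 (sq_nonneg (w s))]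
  -- interval integrability of the R-part
  have hKRii : ∀ u v : ℝ, 0 ≤ u → 0 ≤ v →
      IntervalIntegrable (fun s => exp s * (1 - exp (-(N:ℝ) * s)) * R s) volume u v := by
    intro u v hu hv
    apply ContinuousOn.intervalIntegrable
    refine ContinuousOn.mono
      (((by fun_prop : Continuous fun s : ℝ => exp s * (1 - exp (-(N:ℝ) * s))).continuousOn).mul
        hRcont) ?_
    intro x hx
    exact le_trans (le_min hu hv) hx.1
  -- the rewritten integral equation
  have heq' : ∀ t : ℝ, 0 ≤ t →
      w t = exp (-t) / N * ((∫ s in (0:ℝ)..t, exp s * (1 - exp (-(N:ℝ) * s)) * P s)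
              + ∫ s in (0:ℝ)..t, exp s * (1 - exp (-(N:ℝ) * s)) * R s)
          + exp (-t) / N * (exp ((N:ℝ) * t) - 1) *
            ((∫ s in Ioi t, exp ((1 - (N:ℝ)) * s) * P s)
              + ∫ s in Ioi t, exp ((1 - (N:ℝ)) * s) * R s) := by
    intro t ht
    have e1 : (∫ s in (0:ℝ)..t, exp s * (1 - exp (-(N:ℝ) * s)) * (P s + R s))
        = (∫ s in (0:ℝ)..t, exp s * (1 - exp (-(N:ℝ) * s)) * P s)
          + ∫ s in (0:ℝ)..t, exp s * (1 - exp (-(N:ℝ) * s)) * R s := by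
      rw [← intervalIntegral.integral_add (hKPii t ht) (hKRii 0 t le_rfl ht)]
      congr 1; funext s; ring
    have e2 : (∫ s in Ioi t, exp ((1 - (N:ℝ)) * s) * (P s + R s))
        = (∫ s in Ioi t, exp ((1 - (N:ℝ)) * s) * P s)
          + ∫ s in Ioi t, exp ((1 - (N:ℝ)) * s) * R s := by
      rw [← integral_add (hJPint t ht) (hJRint t ht)]
      congr 1; funext s; ring
    rw [heq t ht, e1, e2]

  -- nonnegativity of the four integrals
  have hIAnn : ∀ t : ℝ, 0 ≤ t → 0 ≤ ∫ s in (0:ℝ)..t, exp s * (1 - exp (-(N:ℝ) * s)) * P s := by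
    intro t ht
    refine intervalIntegral.integral_nonneg ht fun s hs => ?_
    have h2 : (0:ℝ) ≤ 1 - exp (-(N:ℝ) * s) := by
      rw [sub_nonneg]
      exact exp_le_one_iff.mpr (by nlinarith [hs.1])
    exact mul_nonneg (mul_nonneg (exp_pos _).le h2) (hPnn s)
  have hIBnn : ∀ t : ℝ, 0 ≤ t → 0 ≤ ∫ s in (0:ℝ)..t, exp s * (1 - exp (-(N:ℝ) * s)) * R s := by
    intro t ht
    refine intervalIntegral.integral_nonneg ht fun s hs => ?_
    have h2 : (0:ℝ) ≤ 1 - exp (-(N:ℝ) * s) := by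
      rw [sub_nonneg]
      exact exp_le_one_iff.mpr (by nlinarith [hs.1])
    exact mul_nonneg (mul_nonneg (exp_pos _).le h2) (hRnn s hs.1)
  have hICnn : ∀ t : ℝ, 0 ≤ t → 0 ≤ ∫ s in Ioi t, exp ((1 - (N:ℝ)) * s) * P s := by
    intro t ht
    exact setIntegral_nonneg measurableSet_Ioi fun s hs =>
      mul_nonneg (exp_pos _).le (hPnn s)
  have hIDnn : ∀ t : ℝ, 0 ≤ t → 0 ≤ ∫ s in Ioi t, exp ((1 - (N:ℝ)) * s) * R s := by
    intro t ht
    exact setIntegral_nonneg measurableSet_Ioi fun s hs =>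
      mul_nonneg (exp_pos _).le (hRnn s (le_trans ht (le_of_lt hs)))
  -- prefactor bounds for t ∈ [s₀, b]
  have hpre1 : ∀ t : ℝ, t ∈ Icc s₀ b → exp (-b) / 3 ≤ exp (-t) / (N:ℝ) := by
    intro t ht
    exact div_le_div₀ (exp_pos _).le (exp_le_exp.2 (by linarith [ht.2])) hN0 hN3
  have hpre2 : ∀ t : ℝ, t ∈ Icc s₀ b → exp (2 * s₀) - 1 ≤ exp ((N:ℝ) * t) - 1 := by
    intro t ht
    have : exp (2 * s₀) ≤ exp ((N:ℝ) * t) := exp_le_exp.2 (by nlinarith [ht.1, hs₀])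
    linarith
  -- generic nonnegativity on subintervals
  have hKPnnI : ∀ u v : ℝ, 0 ≤ u → u ≤ v →
      0 ≤ ∫ s in u..v, exp s * (1 - exp (-(N:ℝ) * s)) * P s := by
    intro u v hu huv
    refine intervalIntegral.integral_nonneg huv fun s hs => ?_
    have h2 : (0:ℝ) ≤ 1 - exp (-(N:ℝ) * s) := by
      rw [sub_nonneg]
      exact exp_le_one_iff.mpr (by nlinarith [hs.1])
    exact mul_nonneg (mul_nonneg (exp_pos _).le h2) (hPnn s)
  have hKRnnI : ∀ u v : ℝ, 0 ≤ u → u ≤ v →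
      0 ≤ ∫ s in u..v, exp s * (1 - exp (-(N:ℝ) * s)) * R s := by
    intro u v hu huv
    refine intervalIntegral.integral_nonneg huv fun s hs => ?_
    have h2 : (0:ℝ) ≤ 1 - exp (-(N:ℝ) * s) := by
      rw [sub_nonneg]
      exact exp_le_one_iff.mpr (by nlinarith [hs.1])
    exact mul_nonneg (mul_nonneg (exp_pos _).le h2) (hRnn s (le_trans hu hs.1))
  -- base lower bound : w ≥ lam * c_h on [s₀, b]
  have hbase : ∀ t : ℝ, t ∈ Icc s₀ b → lam * c_h ≤ w t := by
    intro t ht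
    have ht0 : (0:ℝ) ≤ t := le_trans hs₀.le ht.1
    -- pointwise lower bound on the middle interval
    have hmid : lam * β * (s₀ / 2) ≤ ∫ s in (s₀/2)..s₀, exp s * (1 - exp (-(N:ℝ) * s)) * R s := by
      have hle : s₀ / 2 ≤ s₀ := by linarith
      have hmono := intervalIntegral.integral_mono_on (f := fun _ => lam * β) hle
        (intervalIntegrable_const) (hKRii (s₀/2) s₀ (by linarith) hs₀.le) ?_
      · rw [intervalIntegral.integral_const, smul_eq_mul] at hmono
        linarith [hmono]
      · intro s hs
        have hs0 : (0:ℝ) ≤ s := le_trans (by linarith) hs.1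
        have hGb : g₀ ≤ G (exp (-s)) := hGs s hs0 hs.2
        have hGpos0 : 0 ≤ G (exp (-s)) := le_trans hg₀.le hGb
        have hE : exp (-(N:ℝ) * s) ≤ exp (-s₀) := exp_le_exp.2 (by nlinarith [hs.1])
        have hE2 : exp (-s₀) ≤ exp (((N:ℝ) - 3) * s) := exp_le_exp.2 (by nlinarith [hs.2])
        have h1mE : (0:ℝ) ≤ 1 - exp (-(N:ℝ) * s) := by
          have : exp (-s₀) < 1 := exp_lt_one_iff.mpr (by linarith)
          linarith
        have hexp1 : (1:ℝ) ≤ exp s := by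
          rw [← Real.exp_zero]; exact exp_le_exp.2 hs0
        rw [hR]
        have m1 : exp (-s₀) * g₀ ≤ exp (((N:ℝ) - 3) * s) * G (exp (-s)) :=
          mul_le_mul hE2 hGb hg₀.le (exp_pos _).le
        have m2 : (1 - exp (-s₀)) * (exp (-s₀) * g₀)
            ≤ (1 - exp (-(N:ℝ) * s)) * (exp (((N:ℝ) - 3) * s) * G (exp (-s))) :=
          mul_le_mul (by linarith) m1 (mul_nonneg (exp_pos _).le hg₀.le) h1mE
        have m3 : lam * ((1 - exp (-s₀)) * (exp (-s₀) * g₀))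
            ≤ lam * ((1 - exp (-(N:ℝ) * s)) * (exp (((N:ℝ) - 3) * s) * G (exp (-s)))) :=
          mul_le_mul_of_nonneg_left m2 hlam0.le
        have hXnn : 0 ≤ (1 - exp (-(N:ℝ) * s)) * (lam * (exp (((N:ℝ) - 3) * s) * G (exp (-s)))) :=
          mul_nonneg h1mE (mul_nonneg hlam0.le (mul_nonneg (exp_pos _).le hGpos0))
        have m4 := le_mul_of_one_le_left hXnn hexp1
        simp only [hβdef]
        linarith [m3, m4]
    -- splitting of the B integral
    have A1 := intervalIntegral.integral_add_adjacent_intervals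
      (hKRii 0 (s₀/2) le_rfl (by linarith)) (hKRii (s₀/2) s₀ (by linarith) hs₀.le)
    have A2 := intervalIntegral.integral_add_adjacent_intervals
      (hKRii 0 s₀ le_rfl hs₀.le) (hKRii s₀ t hs₀.le ht0)
    have hIB : lam * β * (s₀ / 2) ≤ ∫ s in (0:ℝ)..t, exp s * (1 - exp (-(N:ℝ) * s)) * R s := by
      rw [← A2, ← A1]
      have n1 := hKRnnI 0 (s₀/2) le_rfl (by linarith)
      have n3 := hKRnnI s₀ t hs₀.le ht.1
      linarith [hmid]
    -- assemble
    have hw := heq' t ht0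
    have hIA := hIAnn t ht0
    have hIC := hICnn t ht0
    have hID := hIDnn t ht0
    have hpre1b := hpre1 t ht
    have hpre1nn : (0:ℝ) ≤ exp (-t) / N := div_nonneg (exp_pos _).le (Nat.cast_nonneg N)
    have hexpNt : (0:ℝ) ≤ exp ((N:ℝ) * t) - 1 := by
      have : (1:ℝ) ≤ exp ((N:ℝ) * t) := by
        rw [← Real.exp_zero]; exact exp_le_exp.2 (mul_nonneg hN0.le ht0)
      linarith
    have hIBnn0 : (0:ℝ) ≤ lam * β * (s₀ / 2) :=
      mul_nonneg (mul_nonneg hlam0.le hβ.le) (by linarith)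
    have k1 : exp (-b) / 3 * (lam * β * (s₀ / 2))
        ≤ exp (-t) / N * (∫ s in (0:ℝ)..t, exp s * (1 - exp (-(N:ℝ) * s)) * R s) :=
      mul_le_mul hpre1b hIB hIBnn0 hpre1nn
    have hchval : lam * c_h = exp (-b) / 3 * (lam * β * (s₀ / 2)) := by
      simp only [hchdef]; ring
    rw [hw, mul_add, mul_add]
    linarith [k1, hchval, mul_nonneg hpre1nn hIA,
      mul_nonneg (mul_nonneg hpre1nn hexpNt) hIC,
      mul_nonneg (mul_nonneg hpre1nn hexpNt) hID]
  -- the bootstrap step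
  have hstep : ∀ M : ℝ, 0 ≤ M → (∀ t : ℝ, t ∈ Icc s₀ b → M ≤ w t) →
      ∀ t : ℝ, t ∈ Icc s₀ b → K * M ^ 2 ≤ w t := by
    intro M hM hMw t ht
    have ht0 : (0:ℝ) ≤ t := le_trans hs₀.le ht.1
    -- lower bound for the A-part
    have hA : (1 - exp (-(2 * s₀))) / 2 * M ^ 2 * (t - s₀)
        ≤ ∫ s in (0:ℝ)..t, exp s * (1 - exp (-(N:ℝ) * s)) * P s := by
      have hm1 : IntervalIntegrable (fun s => exp s * (1 - exp (-(N:ℝ) * s)) * P s) volume 0 s₀ :=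
        (hKPii t ht0).mono_set
          (by rw [uIcc_of_le hs₀.le, uIcc_of_le ht0]; exact Icc_subset_Icc le_rfl ht.1)
      have hm2 : IntervalIntegrable (fun s => exp s * (1 - exp (-(N:ℝ) * s)) * P s) volume s₀ t :=
        (hKPii t ht0).mono_set
          (by rw [uIcc_of_le ht.1, uIcc_of_le ht0]; exact Icc_subset_Icc hs₀.le le_rfl)
      have hadd := intervalIntegral.integral_add_adjacent_intervals hm1 hm2
      have h0 := hKPnnI 0 s₀ le_rfl hs₀.le
      have hmono := intervalIntegral.integral_mono_on
        (f := fun _ => (1 - exp (-(2 * s₀))) / 2 * M ^ 2) ht.1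
        intervalIntegrable_const hm2 ?_
      · rw [intervalIntegral.integral_const, smul_eq_mul] at hmono
        rw [← hadd]
        linarith [hmono, h0]
      · intro s hs
        have hs0 : (0:ℝ) ≤ s := le_trans hs₀.le hs.1
        have hws := hMw s ⟨hs.1, le_trans hs.2 ht.2⟩
        have hw2 : M ^ 2 ≤ (w s) ^ 2 := pow_le_pow_left₀ hM hws 2
        have hE : exp (-(N:ℝ) * s) ≤ exp (-(2 * s₀)) := exp_le_exp.2 (by nlinarith [hs.1])
        have h1 : exp s * exp (-s) = 1 := by rw [← Real.exp_add]; simp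
        have h1mE : (0:ℝ) ≤ 1 - exp (-(N:ℝ) * s) := by
          have : exp (-(2 * s₀)) < 1 := exp_lt_one_iff.mpr (by linarith)
          linarith
        simp only [hPdef]
        have m1 : (1 - exp (-(2 * s₀))) * M ^ 2 ≤ (1 - exp (-(N:ℝ) * s)) * (w s) ^ 2 :=
          mul_le_mul (by linarith) hw2 (sq_nonneg M) h1mE
        have key : (1 - exp (-(N:ℝ) * s)) * (((N:ℝ) - 1) / 2 * (w s) ^ 2)
            = exp s * (1 - exp (-(N:ℝ) * s)) * (((N:ℝ) - 1) / 2 * exp (-s) * (w s) ^ 2) := by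
          linear_combination (-(1 - exp (-(N:ℝ) * s)) * (((N:ℝ) - 1) / 2 * (w s) ^ 2)) * h1
        rw [← key]
        linarith [m1,
          mul_nonneg (mul_nonneg (by linarith : (0:ℝ) ≤ ((N:ℝ) - 1) / 2 - 1 / 2) h1mE)
            (sq_nonneg (w s))]
    -- lower bound for the C-part
    have hCq : exp (-(3 * b)) / 2 * M ^ 2 * (b - t) ≤ ∫ s in Ioi t, exp ((1 - (N:ℝ)) * s) * P s := by
      have hsub : Ioc t b ⊆ Ioi t := Ioc_subset_Ioi_self
      have hstep1 : (∫ s in Ioc t b, exp ((1 - (N:ℝ)) * s) * P s)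
          ≤ ∫ s in Ioi t, exp ((1 - (N:ℝ)) * s) * P s :=
        setIntegral_mono_set (hJPint t ht0)
          (ae_of_all _ fun s => mul_nonneg (exp_pos _).le (hPnn s))
          (HasSubset.Subset.eventuallyLE hsub)
      have hmono := setIntegral_mono_on
        (f := fun _ => exp (-(3 * b)) / 2 * M ^ 2)
        (integrableOn_const (by rw [Real.volume_Ioc]; exact ENNReal.ofReal_ne_top))
        ((hJPint t ht0).mono_set hsub) measurableSet_Ioc ?_
      · rw [setIntegral_const,
          Real.volume_real_Ioc_of_le (by linarith [ht.2] : t ≤ b), smul_eq_mul] at hmono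
        linarith [hmono, hstep1]
      · intro s hsI
        have hs0 : (0:ℝ) ≤ s := le_trans ht0 hsI.1.le
        have hws := hMw s ⟨le_trans ht.1 hsI.1.le, hsI.2⟩
        have hw2 : M ^ 2 ≤ (w s) ^ 2 := pow_le_pow_left₀ hM hws 2
        have hE : exp (-(3 * b)) ≤ exp (-(N:ℝ) * s) :=
          exp_le_exp.2 (by nlinarith [hsI.2, mul_nonneg (by linarith : (0:ℝ) ≤ 3 - (N:ℝ)) hs0])
        have key2 : exp ((1 - (N:ℝ)) * s) * exp (-s) = exp (-(N:ℝ) * s) := by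
          rw [← Real.exp_add]; ring_nf
        simp only [hPdef]
        have key : exp ((1 - (N:ℝ)) * s) * (((N:ℝ) - 1) / 2 * exp (-s) * (w s) ^ 2)
            = ((N:ℝ) - 1) / 2 * (w s) ^ 2 * exp (-(N:ℝ) * s) := by
          linear_combination (((N:ℝ) - 1) / 2 * (w s) ^ 2) * key2
        rw [key]
        have m1 : M ^ 2 * exp (-(3 * b)) ≤ (w s) ^ 2 * exp (-(N:ℝ) * s) :=
          mul_le_mul hw2 hE (exp_pos _).le (sq_nonneg _)
        linarith [m1,
          mul_nonneg (mul_nonneg (by linarith : (0:ℝ) ≤ ((N:ℝ) - 1) / 2 - 1 / 2) (sq_nonneg (w s)))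
            (exp_pos (-(N:ℝ) * s)).le]
    -- assemble
    have hw := heq' t ht0
    have hIB := hIBnn t ht0
    have hID := hIDnn t ht0
    have hpre1b := hpre1 t ht
    have hpre2b := hpre2 t ht
    have hpre1nn : (0:ℝ) ≤ exp (-t) / N := div_nonneg (exp_pos _).le (Nat.cast_nonneg N)
    have hexpNt : (0:ℝ) ≤ exp ((N:ℝ) * t) - 1 := by
      have : (1:ℝ) ≤ exp ((N:ℝ) * t) := by
        rw [← Real.exp_zero]; exact exp_le_exp.2 (mul_nonneg hN0.le ht0)
      linarith
    have he2s₀ : (0:ℝ) ≤ exp (2 * s₀) - 1 := by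
      have : (1:ℝ) ≤ exp (2 * s₀) := by
        rw [← Real.exp_zero]; exact exp_le_exp.2 (by linarith)
      linarith
    have hAnnL : (0:ℝ) ≤ (1 - exp (-(2 * s₀))) / 2 * M ^ 2 * (t - s₀) := by
      have h' : exp (-(2 * s₀)) < 1 := exp_lt_one_iff.mpr (by linarith)
      exact mul_nonneg (mul_nonneg (by linarith) (sq_nonneg M)) (by linarith [ht.1])
    have hCnnL : (0:ℝ) ≤ exp (-(3 * b)) / 2 * M ^ 2 * (b - t) :=
      mul_nonneg (mul_nonneg (by positivity) (sq_nonneg M)) (by linarith [ht.2])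
    have k1 : exp (-b) / 3 * ((1 - exp (-(2 * s₀))) / 2 * M ^ 2 * (t - s₀))
        ≤ exp (-t) / N * (∫ s in (0:ℝ)..t, exp s * (1 - exp (-(N:ℝ) * s)) * P s) :=
      mul_le_mul hpre1b hA hAnnL hpre1nn
    have k2pre : exp (-b) / 3 * (exp (2 * s₀) - 1) ≤ exp (-t) / N * (exp ((N:ℝ) * t) - 1) :=
      mul_le_mul hpre1b hpre2b he2s₀ hpre1nn
    have k2 : exp (-b) / 3 * (exp (2 * s₀) - 1) * (exp (-(3 * b)) / 2 * M ^ 2 * (b - t))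
        ≤ exp (-t) / N * (exp ((N:ℝ) * t) - 1) * (∫ s in Ioi t, exp ((1 - (N:ℝ)) * s) * P s) :=
      mul_le_mul k2pre hCq hCnnL (mul_nonneg hpre1nn hexpNt)
    have e₁ : c₁ * (M ^ 2 * (t - s₀))
        = exp (-b) / 3 * ((1 - exp (-(2 * s₀))) / 2 * M ^ 2 * (t - s₀)) := by
      simp only [hc₁def]; ring
    have e₂ : c₂ * (M ^ 2 * (b - t))
        = exp (-b) / 3 * (exp (2 * s₀) - 1) * (exp (-(3 * b)) / 2 * M ^ 2 * (b - t)) := by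
      simp only [hc₂def]; ring
    have hKc₁ : K ≤ c₁ := by rw [hKdef]; exact min_le_left _ _
    have hKc₂ : K ≤ c₂ := by rw [hKdef]; exact min_le_right _ _
    have p1 : 0 ≤ (c₁ - K) * (M ^ 2 * (t - s₀)) :=
      mul_nonneg (by linarith) (mul_nonneg (sq_nonneg M) (by linarith [ht.1]))
    have p2 : 0 ≤ (c₂ - K) * (M ^ 2 * (b - t)) :=
      mul_nonneg (by linarith) (mul_nonneg (sq_nonneg M) (by linarith [ht.2]))
    have q : K * M ^ 2 * (t - s₀) + K * M ^ 2 * (b - t) = K * M ^ 2 := by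
      rw [hbdef]; ring
    have final1 : K * M ^ 2
        ≤ exp (-b) / 3 * ((1 - exp (-(2 * s₀))) / 2 * M ^ 2 * (t - s₀))
          + exp (-b) / 3 * (exp (2 * s₀) - 1) * (exp (-(3 * b)) / 2 * M ^ 2 * (b - t)) := by
      linarith [p1, p2, e₁, e₂, q]
    rw [hw, mul_add, mul_add]
    linarith [final1, k1, k2, mul_nonneg hpre1nn hIB,
      mul_nonneg (mul_nonneg hpre1nn hexpNt) hID]
  -- iteration : w is unbounded on [s₀, b]
  have hiter : ∀ k : ℕ, ∀ t : ℝ, t ∈ Icc s₀ b → 2 ^ k * (lam * c_h) ≤ w t := by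
    intro k
    induction k with
    | zero => intro t ht; simpa using hbase t ht
    | succ k ih =>
      have hLnn : (0:ℝ) ≤ lam * c_h := mul_nonneg hlam0.le hch.le
      have hMnn : (0:ℝ) ≤ 2 ^ k * (lam * c_h) := by positivity
      intro t ht
      have h := hstep (2 ^ k * (lam * c_h)) hMnn ih t ht
      have h2k : (1:ℝ) ≤ 2 ^ k := one_le_pow₀ one_le_two
      have p1 : 0 ≤ (K * (lam * c_h) - 2) * ((2:ℝ) ^ k * (2:ℝ) ^ k * (lam * c_h)) :=
        mul_nonneg (by linarith [hKlam]) (by positivity)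
      have p2 : 0 ≤ ((2:ℝ) ^ k * (2:ℝ) ^ k - 2 ^ k) * (lam * c_h) :=
        mul_nonneg (by nlinarith [h2k]) hLnn
      have hgoal : (2:ℝ) ^ (k + 1) * (lam * c_h) = 2 * (2 ^ k * (lam * c_h)) := by ring
      linarith [h, p1, p2, hgoal]
  -- contradiction with integrability
  have hVk : ∀ k : ℕ, (2 ^ k * (lam * c_h)) ^ 2 * exp (-b) ≤ ∫ t in Ioi (0:ℝ), F t := by
    intro k
    have hLnn : (0:ℝ) ≤ lam * c_h := mul_nonneg hlam0.le hch.le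
    have hMnn : (0:ℝ) ≤ 2 ^ k * (lam * c_h) := by positivity
    have hsub : Ioc s₀ b ⊆ Ioi (0:ℝ) := fun x hx => lt_trans hs₀ hx.1
    have h1 : (∫ t in Ioc s₀ b, F t) ≤ ∫ t in Ioi (0:ℝ), F t :=
      setIntegral_mono_set hf (ae_of_all _ hFnn) (HasSubset.Subset.eventuallyLE hsub)
    have h2 : (2 ^ k * (lam * c_h)) ^ 2 * exp (-b) * (b - s₀) ≤ ∫ t in Ioc s₀ b, F t := by
      have hmono := setIntegral_mono_on
        (f := fun _ => (2 ^ k * (lam * c_h)) ^ 2 * exp (-b))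
        (integrableOn_const (by rw [Real.volume_Ioc]; exact ENNReal.ofReal_ne_top))
        (hf.mono_set hsub) measurableSet_Ioc ?_
      · rw [setIntegral_const,
          Real.volume_real_Ioc_of_le (by linarith [hs₀] : s₀ ≤ b), smul_eq_mul] at hmono
        linarith [hmono]
      · intro t htI
        have htIcc : t ∈ Icc s₀ b := ⟨htI.1.le, htI.2⟩
        have ht0 : (0:ℝ) ≤ t := le_trans hs₀.le htIcc.1
        have hwt := hiter k t htIcc
        have hw2 : (2 ^ k * (lam * c_h)) ^ 2 ≤ (w t) ^ 2 := pow_le_pow_left₀ hMnn hwt 2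
        have hE : exp (-b) ≤ exp ((2 - (N:ℝ)) * t) :=
          exp_le_exp.2 (by nlinarith [htIcc.2, mul_nonneg (by linarith : (0:ℝ) ≤ 3 - (N:ℝ)) ht0])
        simp only [hFdef]
        linarith [mul_le_mul hw2 hE (exp_pos _).le (sq_nonneg (w t)),
          mul_nonneg (sq_nonneg (deriv w t)) (exp_pos ((2 - (N:ℝ)) * t)).le]
    have hbs : b - s₀ = 1 := by rw [hbdef]; ring
    rw [hbs, mul_one] at h2
    linarith
  have hE0 : 0 < (lam * c_h) ^ 2 * exp (-b) := by positivity
  obtain ⟨k, hk⟩ := pow_unbounded_of_one_lt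
    ((∫ t in Ioi (0:ℝ), F t) / ((lam * c_h) ^ 2 * exp (-b))) (by norm_num : (1:ℝ) < 2)
  have h2k : (1:ℝ) ≤ 2 ^ k := one_le_pow₀ one_le_two
  have hlt : (∫ t in Ioi (0:ℝ), F t) < 2 ^ k * ((lam * c_h) ^ 2 * exp (-b)) :=
    (div_lt_iff₀ hE0).mp hk
  have hfin := hVk k
  have p : 0 ≤ ((2:ℝ) ^ k * (2:ℝ) ^ k - 2 ^ k) * ((lam * c_h) ^ 2 * exp (-b)) :=
    mul_nonneg (by nlinarith [h2k]) hE0.le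
  linarith [hfin, hlt, p]
end

section
/- Suppose g ∈ L¹(0,1) with g ≥ 0 a.e. and ess sup g > 0, and let N ∈ {2,3}. Then there exists λ* > 0 such that for all λ > λ*, the Navier problem -w'' + (N-2)w' + (N-1)w = ((N-1)/2)e^{-t}w² + λe^{(N-3)t}∫₀^{e^{-t}}g(s)ds, with boundary conditions w'(0) - (N-1)w(0) = 0 and w(∞) = 0, has no weak solution. -/
open MeasureTheory Real Set Filter

set_option maxHeartbeats 2000000 in
theorem stmt17 (N : ℕ) (hN : N = 2 ∨ N = 3)
    (g : ℝ → ℝ) (hg : IntegrableOn g (Ioo 0 1))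
    (hg0 : ∀ᵐ s ∂(volume.restrict (Ioo (0:ℝ) 1)), 0 ≤ g s)
    (hgpos : 0 < ∫ s in Ioo (0:ℝ) 1, g s) :
    ∃ lamStar : ℝ, 0 < lamStar ∧ ∀ lam : ℝ, lamStar < lam →
      ¬ ∃ w : ℝ → ℝ,
        IntegrableOn
          (fun t => ((deriv w t) ^ 2 + (w t) ^ 2) * exp ((2 - (N:ℝ)) * t)) (Ioi 0) ∧
        (∀ t : ℝ, 0 ≤ t →
          w t = (exp (-t) / N) *
              (∫ s in (0:ℝ)..t, exp s *
                ((((N:ℝ) - 1) / 2) * exp (-s) * (w s) ^ 2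
                  + lam * exp (((N:ℝ) - 3) * s) * ∫ u in (0:ℝ)..(exp (-s)), g u))
            + (exp (((N:ℝ) - 1) * t) / N) *
              (∫ s in Ioi t, exp ((1 - (N:ℝ)) * s) *
                ((((N:ℝ) - 1) / 2) * exp (-s) * (w s) ^ 2
                  + lam * exp (((N:ℝ) - 3) * s) * ∫ u in (0:ℝ)..(exp (-s)), g u))) := by
  have hN2 : (2:ℝ) ≤ (N:ℝ) := by rcases hN with h | h <;> rw [h] <;> norm_num
  have hN3 : (N:ℝ) ≤ 3 := by rcases hN with h | h <;> rw [h] <;> norm_num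
  have hNpos' : (0:ℝ) < (N:ℝ) := by linarith
  have hrs : volume.restrict (Ioo (0:ℝ) 1) = volume.restrict (Ioc 0 1) :=
    Measure.restrict_congr_set Ioo_ae_eq_Ioc
  have hg' : IntegrableOn g (Ioc 0 1) := by rw [IntegrableOn, ← hrs]; exact hg
  have hg0' : ∀ᵐ s ∂(volume.restrict (Ioc (0:ℝ) 1)), 0 ≤ g s := by rw [← hrs]; exact hg0
  obtain ⟨c0, hc0def⟩ : ∃ c0 : ℝ, c0 = ∫ s in Ioo (0:ℝ) 1, g s := ⟨_, rfl⟩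
  have hc0 : 0 < c0 := by rw [hc0def]; exact hgpos
  obtain ⟨K, hKdef⟩ : ∃ K : ℝ → ℝ, K = fun x => ∫ u in Ioc (0:ℝ) (min x 1), g u := ⟨_, rfl⟩
  have hKmono : Monotone K := by
    intro x y hxy
    rw [hKdef]
    apply setIntegral_mono_set (hg'.mono_set (Ioc_subset_Ioc_right (min_le_right y 1)))
      (ae_restrict_of_ae_restrict_of_subset (Ioc_subset_Ioc_right (min_le_right y 1)) hg0')
      ((Ioc_subset_Ioc_right (min_le_min_right 1 hxy)).eventuallyLE)
  have hKmeas : Measurable K := hKmono.measurable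
  have hK0 : ∀ x, 0 ≤ K x := by
    intro x
    rw [hKdef]
    exact setIntegral_nonneg_of_ae_restrict
      (ae_restrict_of_ae_restrict_of_subset (Ioc_subset_Ioc_right (min_le_right x 1)) hg0')
  have hK1 : K 1 = c0 := by
    simp only [hKdef, min_self]
    rw [hc0def, setIntegral_congr_set Ioo_ae_eq_Ioc]
  have hKle : ∀ x, K x ≤ c0 := by
    intro x
    have h1 : K x = K (min x 1) := by simp only [hKdef, min_assoc, min_self]
    rw [h1, ← hK1]
    exact hKmono (min_le_right x 1)
  -- existence of x₀
  obtain ⟨x0, hx00, hx01, hx0K⟩ : ∃ x0 : ℝ, 0 < x0 ∧ x0 < 1 ∧ c0/2 ≤ K x0 := by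
    have hset : ∀ n : ℕ, MeasurableSet (Ioo (0:ℝ) (1 - 1/(n+2))) := fun n => measurableSet_Ioo
    have hmono : Monotone (fun n : ℕ => Ioo (0:ℝ) (1 - 1/(n+2))) := by
      intro m n hmn
      apply Ioo_subset_Ioo_right
      have h2 : (0:ℝ) < m + 2 := by positivity
      have h3 : (m:ℝ) + 2 ≤ n + 2 := by exact_mod_cast by omega
      have := one_div_le_one_div_of_le h2 h3
      linarith
    have hunion : (⋃ n : ℕ, Ioo (0:ℝ) (1 - 1/(n+2))) = Ioo 0 1 := by
      ext y
      simp only [mem_iUnion, mem_Ioo]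
      constructor
      · rintro ⟨n, h1, h2⟩
        refine ⟨h1, ?_⟩
        have : (0:ℝ) < 1/(n+2) := by positivity
        linarith
      · rintro ⟨h1, h2⟩
        obtain ⟨n, hn⟩ := exists_nat_gt (1/(1 - y))
        refine ⟨n, h1, ?_⟩
        have h3 : (0:ℝ) < 1 - y := by linarith
        have h5 : (0:ℝ) < (n:ℝ) + 2 := by positivity
        rw [div_lt_iff₀ h3] at hn
        have h6 : 1/((n:ℝ)+2) < 1 - y := by
          rw [div_lt_iff₀ h5]
          nlinarith [Nat.cast_nonneg (α := ℝ) n]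
        linarith
    have htend := MeasureTheory.tendsto_setIntegral_of_monotone hset hmono (by rw [hunion]; exact hg)
    rw [hunion] at htend
    rw [← hc0def] at htend
    obtain ⟨n, hn⟩ := (htend.eventually (eventually_gt_nhds (by linarith : c0/2 < c0))).exists
    refine ⟨1 - 1/(n+2), ?_, ?_, ?_⟩
    · have h3 : 1/((n:ℝ)+2) ≤ 1/2 := by
        apply one_div_le_one_div_of_le
        · norm_num
        · have : (0:ℝ) ≤ n := Nat.cast_nonneg n
          linarith
      linarith
    · have h2 : (0:ℝ) < 1/((n:ℝ)+2) := by positivity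
      linarith
    · have hle : (∫ s in Ioo (0:ℝ) (1 - 1/(n+2)), g s) ≤ K (1 - 1/(n+2)) := by
        rw [hKdef]
        apply setIntegral_mono_set (hg'.mono_set (Ioc_subset_Ioc_right (min_le_right _ 1)))
          (ae_restrict_of_ae_restrict_of_subset (Ioc_subset_Ioc_right (min_le_right _ 1)) hg0')
        apply HasSubset.Subset.eventuallyLE
        intro y hy
        simp only [mem_Ioo] at hy
        have h2 : (0:ℝ) < 1/((n:ℝ)+2) := by positivity
        exact ⟨hy.1, le_min hy.2.le (by linarith)⟩
      linarith
  -- the constants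
  obtain ⟨s1, hs1def⟩ : ∃ s1 : ℝ, s1 = -Real.log x0 := ⟨_, rfl⟩
  have hs1 : 0 < s1 := by
    have := Real.log_neg hx00 hx01
    rw [hs1def]; linarith
  have hx0exp : x0 = exp (-s1) := by
    rw [hs1def, neg_neg, Real.exp_log hx00]
  have hKx : ∀ s : ℝ, s ≤ s1 → c0/2 ≤ K (exp (-s)) := by
    intro s hs
    refine le_trans hx0K (hKmono ?_)
    rw [hx0exp]
    exact exp_le_exp.mpr (by linarith)
  obtain ⟨a, hadef⟩ : ∃ a : ℝ, a = (c0/2) * exp (-2*s1) * (s1/2) / 3 := ⟨_, rfl⟩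
  have ha : 0 < a := by rw [hadef]; positivity
  have hc02 : 0 < c0/2 := by positivity
  refine ⟨max 1 (96 * exp (3*s1) / (s1 * a)), lt_of_lt_of_le one_pos (le_max_left _ _), ?_⟩
  intro lam hlam
  rintro ⟨w, hw1, hw2⟩
  have hlam0 : (0:ℝ) < lam := lt_of_lt_of_le one_pos (le_trans (le_max_left _ _) hlam.le)
  have hlamA : 96 ≤ exp (-(3*s1)) * s1 * (a * lam) := by
    have h1 : 96 * exp (3*s1) / (s1 * a) < lam := lt_of_le_of_lt (le_max_right _ _) hlam
    rw [div_lt_iff₀ (by positivity)] at h1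
    have hee : exp (3*s1) * exp (-(3*s1)) = 1 := by rw [← exp_add]; simp
    nlinarith [exp_pos (-(3*s1)), exp_pos (3*s1)]
  -- notation
  obtain ⟨Φ, hΦdef⟩ : ∃ Φ : ℝ → ℝ, Φ = fun s => exp ((1 - (N:ℝ)) * s) *
      ((((N:ℝ) - 1) / 2) * exp (-s) * (w s) ^ 2
        + lam * exp (((N:ℝ) - 3) * s) * ∫ u in (0:ℝ)..(exp (-s)), g u) := ⟨_, rfl⟩
  have hw2' : ∀ t : ℝ, 0 ≤ t →
      w t = (exp (-t) / N) *
          (∫ s in (0:ℝ)..t, exp s *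
            ((((N:ℝ) - 1) / 2) * exp (-s) * (w s) ^ 2
              + lam * exp (((N:ℝ) - 3) * s) * ∫ u in (0:ℝ)..(exp (-s)), g u))
        + (exp (((N:ℝ) - 1) * t) / N) * (∫ s in Ioi t, Φ s) := by
    intro t ht
    simp only [hΦdef]
    exact hw2 t ht
  -- G-values
  have hG : ∀ s : ℝ, 0 ≤ s → (∫ u in (0:ℝ)..(exp (-s)), g u) = K (exp (-s)) := by
    intro s hs
    rw [intervalIntegral.integral_of_le (exp_pos _).le]
    simp only [hKdef]
    rw [min_eq_left (exp_le_one_iff.mpr (by linarith : -s ≤ 0))]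
  have hcoef : (0:ℝ) ≤ ((N:ℝ) - 1)/2 := by linarith
  have hh_nonneg : ∀ s : ℝ, 0 ≤ s →
      0 ≤ (((N:ℝ) - 1) / 2) * exp (-s) * (w s) ^ 2
        + lam * exp (((N:ℝ) - 3) * s) * ∫ u in (0:ℝ)..(exp (-s)), g u := by
    intro s hs
    rw [hG s hs]
    have := hK0 (exp (-s))
    positivity
  have hΦnn : ∀ s : ℝ, 0 ≤ s → 0 ≤ Φ s := by
    intro s hs
    rw [hΦdef]
    exact mul_nonneg (exp_pos _).le (hh_nonneg s hs)
  -- exp identities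
  have hexpprod : ∀ s : ℝ, exp ((1 - (N:ℝ))*s) * exp (((N:ℝ)-3)*s) = exp (-(2*s)) := by
    intro s; rw [← exp_add]; congr 1; ring
  have hexpNs : ∀ s : ℝ, exp ((1 - (N:ℝ))*s) * exp (-s) = exp (-((N:ℝ)*s)) := by
    intro s; rw [← exp_add]; congr 1; ring
  -- integrability of Φ on Ioi 0
  have hΦint : IntegrableOn Φ (Ioi 0) := by
    have hd : Measurable (deriv w) := measurable_deriv w
    have hdm : Measurable (fun t => (deriv w t)^2 * exp ((2-(N:ℝ))*t)) :=
      (hd.pow_const 2).mul (Real.measurable_exp.comp (measurable_id.const_mul ((2:ℝ)-N)))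
    have hfm : AEMeasurable (fun t => ((deriv w t)^2 + (w t)^2) * exp ((2-(N:ℝ))*t))
        (volume.restrict (Ioi 0)) := hw1.1.aemeasurable
    have hw2m : AEMeasurable (fun t => (w t)^2) (volume.restrict (Ioi 0)) := by
      have h1 : AEMeasurable (fun t => (w t)^2 * exp ((2-(N:ℝ))*t)) (volume.restrict (Ioi 0)) := by
        have he : (fun t => (w t)^2 * exp ((2-(N:ℝ))*t))
            = fun t => ((deriv w t)^2 + (w t)^2) * exp ((2-(N:ℝ))*t)
              - (deriv w t)^2 * exp ((2-(N:ℝ))*t) := by funext t; ring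
        rw [he]; exact hfm.sub hdm.aemeasurable
      have h2 := h1.mul
        (Real.measurable_exp.comp (measurable_id.const_mul (-((2:ℝ)-N)))).aemeasurable
      refine h2.congr (Eventually.of_forall fun t => ?_)
      show (w t)^2 * exp ((2-(N:ℝ))*t) * exp (-((2:ℝ)-N)*t) = (w t)^2
      rw [mul_assoc, ← Real.exp_add,
        show (2-(N:ℝ))*t + -((2:ℝ)-N)*t = 0 from by ring, Real.exp_zero, mul_one]
    have part1 : IntegrableOn (fun s => (((N:ℝ)-1)/2) * exp (-((N:ℝ)*s)) * (w s)^2) (Ioi 0) := by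
      have m1 : Measurable (fun s : ℝ => exp (-((N:ℝ)*s))) := by fun_prop
      have m2 : AEMeasurable (fun s : ℝ => (((N:ℝ)-1)/2) * exp (-((N:ℝ)*s)) * (w s)^2)
          (volume.restrict (Ioi 0)) := (aemeasurable_const.mul m1.aemeasurable).mul hw2m
      refine Integrable.mono hw1 m2.aestronglyMeasurable ?_
      filter_upwards [ae_restrict_mem measurableSet_Ioi] with s hs
      have hs0 : (0:ℝ) ≤ s := (le_of_lt hs)
      have hle : exp (-((N:ℝ)*s)) ≤ exp ((2-(N:ℝ))*s) := exp_le_exp.mpr (by nlinarith)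
      rw [Real.norm_eq_abs, Real.norm_eq_abs,
        abs_of_nonneg (mul_nonneg (mul_nonneg hcoef (exp_pos _).le) (sq_nonneg _)),
        abs_of_nonneg (by positivity)]
      have h1 : (w s)^2 * exp (-((N:ℝ)*s)) ≤ (w s)^2 * exp ((2-(N:ℝ))*s) :=
        mul_le_mul_of_nonneg_left hle (sq_nonneg _)
      have h2 : (((N:ℝ)-1)/2) * ((w s)^2 * exp (-((N:ℝ)*s)))
          ≤ 1 * ((w s)^2 * exp (-((N:ℝ)*s))) :=
        mul_le_mul_of_nonneg_right (by linarith) (mul_nonneg (sq_nonneg _) (exp_pos _).le)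
      have h3 : 0 ≤ (deriv w s)^2 * exp ((2-(N:ℝ))*s) := mul_nonneg (sq_nonneg _) (exp_pos _).le
      nlinarith [h1, h2, h3]
    have part2 : IntegrableOn (fun s => lam * (exp (-(2*s)) * K (exp (-s)))) (Ioi 0) := by
      have hbase : IntegrableOn (fun s : ℝ => exp (-2 * s)) (Ioi 0) :=
        exp_neg_integrableOn_Ioi 0 (by norm_num)
      have m1 : Measurable (fun s : ℝ => lam * (exp (-(2*s)) * K (exp (-s)))) := by
        have mK : Measurable (fun s : ℝ => K (exp (-s))) :=
          hKmeas.comp (Real.measurable_exp.comp measurable_neg)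
        have mE : Measurable (fun s : ℝ => exp (-(2*s))) := by fun_prop
        exact (mE.mul mK).const_mul lam
      refine Integrable.mono (hbase.const_mul (lam * c0)) m1.aestronglyMeasurable ?_
      filter_upwards [ae_restrict_mem measurableSet_Ioi] with s _
      have h1 := hK0 (exp (-s))
      have h2 := hKle (exp (-s))
      have h3 := (exp_pos (-(2*s))).le
      rw [Real.norm_eq_abs, Real.norm_eq_abs,
        abs_of_nonneg (mul_nonneg hlam0.le (mul_nonneg h3 h1)),
        abs_of_nonneg (by positivity)]
      rw [show (-2 : ℝ) * s = -(2*s) from by ring]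
      calc lam * (exp (-(2*s)) * K (exp (-s))) ≤ lam * (exp (-(2*s)) * c0) := by
            exact mul_le_mul_of_nonneg_left (mul_le_mul_of_nonneg_left h2 h3) hlam0.le
        _ = lam * c0 * exp (-(2*s)) := by ring
    refine IntegrableOn.congr_fun (part1.add part2) ?_ measurableSet_Ioi
    intro s hs
    have hs0 : (0:ℝ) ≤ s := le_of_lt hs
    show (((N:ℝ)-1)/2) * exp (-((N:ℝ)*s)) * (w s)^2 + lam * (exp (-(2*s)) * K (exp (-s))) = Φ s
    simp only [hΦdef]
    rw [hG s hs0, mul_add]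
    congr 1
    · rw [← hexpNs s]; ring
    · rw [← hexpprod s]; ring
  -- the key comparison lemma
  have key : ∀ t : ℝ, 0 ≤ t → ∀ p q C : ℝ, t ≤ p → p < q → 0 ≤ C →
      (∀ s ∈ Ioc p q, C ≤ Φ s) → C * (q - p) / N ≤ w t := by
    intro t ht p q C htp hpq hC0 hCφ
    have hIoc_sub : Ioc p q ⊆ Ioi t := fun x hx => lt_of_le_of_lt htp hx.1
    have hIoi_sub : Ioi t ⊆ Ioi 0 := fun x hx => lt_of_le_of_lt ht hx
    have hB : C * (q - p) ≤ ∫ s in Ioi t, Φ s := by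
      have h1 : C * (q - p) = C * (volume (Ioc p q)).toReal := by
        rw [Real.volume_Ioc, ENNReal.toReal_ofReal (by linarith)]
      rw [h1]
      calc C * (volume (Ioc p q)).toReal
          ≤ ∫ s in Ioc p q, Φ s :=
            setIntegral_ge_of_const_le_real measurableSet_Ioc measure_Ioc_lt_top.ne hCφ
              (hΦint.mono_set (hIoc_sub.trans hIoi_sub))
        _ ≤ ∫ s in Ioi t, Φ s := by
            apply setIntegral_mono_set (hΦint.mono_set hIoi_sub)
            · filter_upwards [ae_restrict_mem measurableSet_Ioi] with s hs
              exact hΦnn s (le_of_lt (lt_of_le_of_lt ht hs))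
            · exact hIoc_sub.eventuallyLE
    have hI0 : 0 ≤ ∫ s in Ioi t, Φ s := le_trans (mul_nonneg hC0 (by linarith)) hB
    have hA : 0 ≤ (exp (-t) / N) *
        (∫ s in (0:ℝ)..t, exp s *
          ((((N:ℝ) - 1) / 2) * exp (-s) * (w s) ^ 2
            + lam * exp (((N:ℝ) - 3) * s) * ∫ u in (0:ℝ)..(exp (-s)), g u)) := by
      apply mul_nonneg (by positivity)
      apply intervalIntegral.integral_nonneg ht
      intro u hu
      exact mul_nonneg (exp_pos _).le (hh_nonneg u hu.1)
    have hE : (1:ℝ) ≤ exp (((N:ℝ)-1)*t) := one_le_exp (by nlinarith)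
    have h5 : C * (q - p) / N ≤ (exp (((N:ℝ)-1)*t)/N) * ∫ s in Ioi t, Φ s := by
      calc C * (q - p) / N ≤ (∫ s in Ioi t, Φ s) / N := by gcongr
        _ = (1/N) * ∫ s in Ioi t, Φ s := by ring
        _ ≤ (exp (((N:ℝ)-1)*t)/N) * ∫ s in Ioi t, Φ s := by gcongr
    rw [hw2' t ht]
    linarith
  -- base estimate
  have base : ∀ t ∈ Icc (s1/4) (s1/2), a * lam ≤ w t := by
    intro t ht
    have ht0 : (0:ℝ) ≤ t := le_trans (by linarith) ht.1
    have hCφ : ∀ s ∈ Ioc (s1/2) s1, lam * ((c0/2) * exp (-(2*s1))) ≤ Φ s := by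
      intro s hs
      have hs0 : (0:ℝ) < s := lt_of_le_of_lt (by linarith) hs.1
      have hKs : c0/2 ≤ K (exp (-s)) := hKx s hs.2
      have he2 : exp (-(2*s1)) ≤ exp (-(2*s)) := exp_le_exp.mpr (by linarith [hs.2])
      have hT1 : 0 ≤ (((N:ℝ)-1)/2) * exp (-s) * (w s)^2 := by positivity
      have hstep1 : lam * ((c0/2) * exp (-(2*s1))) ≤ lam * (exp (-(2*s)) * K (exp (-s))) := by
        apply mul_le_mul_of_nonneg_left _ hlam0.le
        calc (c0/2) * exp (-(2*s1)) ≤ K (exp (-s)) * exp (-(2*s)) :=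
              mul_le_mul hKs he2 (exp_pos _).le (hK0 _)
          _ = exp (-(2*s)) * K (exp (-s)) := by ring
      refine le_trans hstep1 ?_
      simp only [hΦdef]
      rw [hG s hs0.le, mul_add]
      have h2 : lam * (exp (-(2*s)) * K (exp (-s)))
          = exp ((1 - (N:ℝ))*s) * (lam * exp (((N:ℝ)-3)*s) * K (exp (-s))) := by
        rw [← hexpprod s]; ring
      rw [h2]
      have h3 : 0 ≤ exp ((1 - (N:ℝ))*s) * ((((N:ℝ)-1)/2) * exp (-s) * (w s)^2) :=
        mul_nonneg (exp_pos _).le hT1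
      linarith
    have hkey := key t ht0 (s1/2) s1 (lam * ((c0/2) * exp (-(2*s1)))) ht.2 (by linarith)
      (by positivity) hCφ
    refine le_trans ?_ hkey
    rw [le_div_iff₀ hNpos', hadef]
    have hP : 0 < (c0/2) * exp (-(2*s1)) * (s1/2) * lam := by positivity
    have hexpeq : exp (-2*s1) = exp (-(2*s1)) := by norm_num
    rw [hexpeq]
    nlinarith
  -- main induction
  have main : ∀ k : ℕ, ∀ t ∈ Icc (s1/4) (s1/4 + (s1/4)*(1/2)^k), (2:ℝ)^k * (a*lam) ≤ w t := by
    intro k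
    induction k with
    | zero =>
      intro t ht
      simp only [pow_zero, mul_one, one_mul] at ht ⊢
      exact base t ⟨ht.1, by linarith [ht.2]⟩
    | succ k ih =>
      intro t ht
      obtain ⟨P, hPdef⟩ : ∃ P : ℝ, P = (2:ℝ)^k := ⟨_, rfl⟩
      have hP : 0 < P := by rw [hPdef]; positivity
      obtain ⟨M, hMdef⟩ : ∃ M : ℝ, M = P * (a*lam) := ⟨_, rfl⟩
      have hM : 0 < M := by rw [hMdef]; positivity
      obtain ⟨p, hpdef⟩ : ∃ p : ℝ, p = s1/4 + (s1/4)*(1/2)^(k+1) := ⟨_, rfl⟩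
      obtain ⟨q, hqdef⟩ : ∃ q : ℝ, q = s1/4 + (s1/4)*(1/2)^k := ⟨_, rfl⟩
      have htp : t ≤ p := by rw [hpdef]; exact ht.2
      have hhalf : ((1:ℝ)/2)^k = 1/P := by
        rw [hPdef, div_pow, one_pow]
      have hhalf1 : ((1:ℝ)/2)^(k+1) = 1/(2*P) := by
        rw [pow_succ, hhalf]; ring
      have hpq : p < q := by
        rw [hpdef, hqdef, hhalf, hhalf1]
        have : 1/(2*P) < 1/P := by
          apply div_lt_div_of_pos_left one_pos hP; linarith
        nlinarith
      have ht0 : (0:ℝ) ≤ t := le_trans (by linarith) ht.1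
      have hqs1 : q ≤ s1/2 := by
        rw [hqdef, hhalf]
        have h1 : 1/P ≤ 1 := by
          rw [div_le_one hP, hPdef]; exact one_le_pow₀ one_le_two
        nlinarith
      obtain ⟨C, hCdef⟩ : ∃ C : ℝ, C = (((N:ℝ)-1)/2) * exp (-(3*s1)) * M^2 := ⟨_, rfl⟩
      have hC0 : 0 ≤ C := by rw [hCdef]; positivity
      have hCφ : ∀ s ∈ Ioc p q, C ≤ Φ s := by
        intro s hs
        have hsIcc : s ∈ Icc (s1/4) (s1/4 + (s1/4)*(1/2)^k) := by
          constructor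
          · have hp4 : s1/4 ≤ p := by
              rw [hpdef]
              have : 0 ≤ (s1/4)*((1:ℝ)/2)^(k+1) := by positivity
              linarith
            linarith [hs.1]
          · exact hqdef ▸ hs.2
        have hws : M ≤ w s := by
          rw [hMdef, hPdef]
          exact ih s hsIcc
        have hs0 : (0:ℝ) < s := lt_of_lt_of_le (by linarith) hsIcc.1
        have hss1 : s ≤ s1/2 := le_trans hs.2 hqs1
        have hwsq : M^2 ≤ (w s)^2 := pow_le_pow_left₀ hM.le hws 2
        have hexple : exp (-(3*s1)) ≤ exp (-((N:ℝ)*s)) := by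
          apply exp_le_exp.mpr
          nlinarith
        have hstep : C ≤ (((N:ℝ)-1)/2) * exp (-((N:ℝ)*s)) * (w s)^2 := by
          rw [hCdef]
          apply mul_le_mul _ hwsq (by positivity) (by positivity)
          exact mul_le_mul_of_nonneg_left hexple hcoef
        refine le_trans hstep ?_
        simp only [hΦdef]
        rw [mul_add]
        have h2 : (((N:ℝ)-1)/2) * exp (-((N:ℝ)*s)) * (w s)^2
            = exp ((1 - (N:ℝ))*s) * ((((N:ℝ)-1)/2) * exp (-s) * (w s)^2) := by
          rw [← hexpNs s]; ring
        rw [h2]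
        have h3 : 0 ≤ exp ((1 - (N:ℝ))*s) *
            (lam * exp (((N:ℝ)-3)*s) * ∫ u in (0:ℝ)..(exp (-s)), g u) := by
          rw [hG s hs0.le]
          have := hK0 (exp (-s))
          positivity
        linarith
      have hkey := key t ht0 p q C htp hpq hC0 hCφ
      refine le_trans ?_ hkey
      rw [le_div_iff₀ hNpos']
      have hqp : q - p = s1/(8*P) := by
        rw [hqdef, hpdef, hhalf, hhalf1]
        field_simp
        ring
      rw [hqp, hCdef, hMdef]
      have hgoal : (2:ℝ)^(k+1) = 2*P := by rw [pow_succ, hPdef]; ring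
      rw [hgoal]
      have hX : 0 < a * lam := by positivity
      have hE : 0 < exp (-(3*s1)) := exp_pos _
      have hC2 : (((N:ℝ)-1)/2) * exp (-(3*s1)) * (P*(a*lam))^2 * (s1/(8*P))
          = (((N:ℝ)-1)/16) * (exp (-(3*s1)) * s1 * (a*lam)) * (a*lam) * P := by
        field_simp
        ring
      rw [hC2]
      nlinarith [mul_pos hX hP, mul_le_mul_of_nonneg_right hlamA (mul_pos hX hP).le]
  -- conclusion
  have hfin : ∀ k : ℕ, (2:ℝ)^k * (a*lam) ≤ w (s1/4) := by
    intro k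
    apply main k
    constructor
    · exact le_refl _
    · have : 0 ≤ (s1/4)*((1:ℝ)/2)^k := by positivity
      linarith
  obtain ⟨k, hk⟩ := pow_unbounded_of_one_lt (w (s1/4) / (a*lam)) one_lt_two
  rw [div_lt_iff₀ (by positivity)] at hk
  have := hfin k
  nlinarith
end
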